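/- arXiv:math/0311203 — 3 statements merged into one kernel-verified Lean document; each statement's English description precedes it below -/
import Mathlib

section
/- Let w = (w_1,...,w_n) be a minimal lace diagram with rank conditions r, and suppose a transformation is allowed at (i,j) (i.e., 1 <= i <= n-1, 1 <= j < e_i, and exactly one of w_i(j) > w_i(j+1), w_{i+1}^{-1}(j) > w_{i+1}^{-1}(j+1) holds). Then w' = (w_1,...,w_{i-1}, w_i s_j, s_j w_{i+1}, w_{i+2},...,w_n) is again a minimal lace diagram with rank conditions r. -/
open MvPolynomial

/-! Common setup.  Dots in columns, positions in permutations, and variable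
indices are all 0-indexed: dot `q` (0-indexed) of column `i` is dot `q+1`
(1-indexed) in the paper, the variable `(i, j) : ℕ × ℕ` is the Chern root
`x^i_{j+1}`, and in the Schubert variable type `ℕ ⊕ ℕ`, `Sum.inl a` is
`x_{a+1}` and `Sum.inr b` is `y_{b+1}`. -/

/-- Coxeter length = number of inversions of a (finitely supported) permutation of ℕ. -/
noncomputable def ell (w : Equiv.Perm ℕ) : ℕ :=
  {p : ℕ × ℕ | p.1 < p.2 ∧ w p.2 < w p.1}.ncard

/-- A finitely supported permutation of ℕ. -/
def FinSupp (w : Equiv.Perm ℕ) : Prop := {x | w x ≠ x}.Finite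

/-- A lace diagram for the dimension vector `e 0, …, e n`, encoded as a sequence
`w 1, …, w n` of finitely supported permutations of ℕ (normalized so that
`w i = 1` outside `1 ≤ i ≤ n`): all descent positions of `w i` are `< e i` and
all descent positions of `(w i)⁻¹` are `< e (i-1)` (0-indexed positions). -/
def IsLace (n : ℕ) (e : ℕ → ℕ) (w : ℕ → Equiv.Perm ℕ) : Prop :=
  (∀ i, i = 0 ∨ n < i → w i = 1) ∧
  ∀ i, 1 ≤ i → i ≤ n → FinSupp (w i) ∧
    (∀ k, w i (k + 1) < w i k → k < e i) ∧
    (∀ k, (w i)⁻¹ (k + 1) < (w i)⁻¹ k → k < e (i - 1))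

/-- `chain w i k p = (w k)⁻¹ (⋯ ((w (i+1))⁻¹ p))` for `k ≥ i`, and `p` for `k ≤ i`. -/
def chain (w : ℕ → Equiv.Perm ℕ) (i : ℕ) : ℕ → ℕ → ℕ
  | 0, p => p
  | k + 1, p => if k + 1 ≤ i then p else (w (k + 1))⁻¹ (chain w i k p)

/-- The rank conditions of a lace diagram: `rank e w i j` is the number of dots
`p < e i` of column `i` whose strand continues through column `j`. -/
noncomputable def rank (e : ℕ → ℕ) (w : ℕ → Equiv.Perm ℕ) (i j : ℕ) : ℕ :=
  {p : ℕ | p < e i ∧ ∀ k, i < k → k ≤ j → chain w i k p < e k}.ncard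

/-- The lace diagram `w` has rank conditions `r` (for `0 ≤ i ≤ j ≤ n`). -/
def RankEq (n : ℕ) (e : ℕ → ℕ) (w : ℕ → Equiv.Perm ℕ) (r : ℕ → ℕ → ℕ) : Prop :=
  ∀ i j, i ≤ j → j ≤ n → rank e w i j = r i j

/-- The length of a lace diagram. -/
noncomputable def diagLength (n : ℕ) (w : ℕ → Equiv.Perm ℕ) : ℕ :=
  ∑ i ∈ Finset.Icc 1 n, ell (w i)

/-- The expected codimension `d(r)`. -/
def codim (n : ℕ) (r : ℕ → ℕ → ℕ) : ℕ :=
  ∑ i ∈ Finset.range (n + 1), ∑ j ∈ Finset.range (n + 1),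
    if i < j then (r i (j - 1) - r i j) * (r (i + 1) j - r i j) else 0

/-- A minimal lace diagram: its length equals the expected codimension of its
rank conditions. -/
def IsMinimal (n : ℕ) (e : ℕ → ℕ) (w : ℕ → Equiv.Perm ℕ) : Prop :=
  IsLace n e w ∧ diagLength n w = codim n (rank e w)

/-- The longest element of `S m` (0-indexed), as a permutation of ℕ. -/
def longest (m : ℕ) : Equiv.Perm ℕ where
  toFun i := if i < m then m - 1 - i else i
  invFun i := if i < m then m - 1 - i else i
  left_inv i := by dsimp only; split_ifs <;> omega
  right_inv i := by dsimp only; split_ifs <;> omega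

/-- Interchanging the x-variables `x (i+1)` and `x (i+2)` (0-indexed: `inl i`
and `inl (i+1)`). -/
noncomputable def sX (i : ℕ) (f : MvPolynomial (ℕ ⊕ ℕ) ℤ) : MvPolynomial (ℕ ⊕ ℕ) ℤ :=
  rename (Sum.map (Equiv.swap i (i + 1)) id) f

/-- `S` is the family of double Schubert polynomials `S w = 𝔖_w(x; y)`:
it takes the prescribed product value on each longest element, it satisfies the
divided difference recursion `(x i - x (i+1)) * S (w * s i) = S w - (S w)^{s i}`
when `w` has a descent at `i` and `(S w)^{s i} = S w` otherwise, and only the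
variables up to the last descents of `w` and `w⁻¹` occur in `S w`. -/
def IsSchubertFamily (S : Equiv.Perm ℕ → MvPolynomial (ℕ ⊕ ℕ) ℤ) : Prop :=
  (∀ m : ℕ, S (longest m) =
      ∏ i ∈ Finset.range m, ∏ j ∈ Finset.range m,
        if i + j + 2 ≤ m then X (Sum.inl i) - X (Sum.inr j) else 1) ∧
  (∀ w : Equiv.Perm ℕ, FinSupp w → ∀ i : ℕ,
    (w (i + 1) < w i →
      (X (Sum.inl i) - X (Sum.inl (i + 1))) * S (w * Equiv.swap i (i + 1)) =
        S w - sX i (S w)) ∧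
    (w i < w (i + 1) → sX i (S w) = S w)) ∧
  (∀ w : Equiv.Perm ℕ, FinSupp w → ∀ k l : ℕ,
    (∀ t, k ≤ t → ¬w (t + 1) < w t) → (∀ t, l ≤ t → ¬w⁻¹ (t + 1) < w⁻¹ t) →
    ∀ v ∈ (S w).vars, (∃ a < k, v = Sum.inl a) ∨ (∃ b < l, v = Sum.inr b))

/-- The product `S(w) = 𝔖_{w 1}(x^1;x^0) ⋯ 𝔖_{w n}(x^n;x^{n-1})`, in the
variables `(i, j) = x^i_{j+1}`. -/
noncomputable def Sprod (n : ℕ) (S : Equiv.Perm ℕ → MvPolynomial (ℕ ⊕ ℕ) ℤ)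
    (w : ℕ → Equiv.Perm ℕ) : MvPolynomial (ℕ × ℕ) ℤ :=
  ∏ i ∈ Finset.Icc 1 n,
    rename (Sum.elim (fun a => (i, a)) (fun b => (i - 1, b))) (S (w i))

/-- The component-formula polynomial `Q_r`: the sum of `Sprod n S w` over all
minimal lace diagrams `w` with rank conditions `r`. -/
noncomputable def Qpoly (n : ℕ) (e : ℕ → ℕ) (r : ℕ → ℕ → ℕ)
    (S : Equiv.Perm ℕ → MvPolynomial (ℕ ⊕ ℕ) ℤ) : MvPolynomial (ℕ × ℕ) ℤ :=
  ∑ᶠ (w : ℕ → Equiv.Perm ℕ) (_ : IsMinimal n e w ∧ RankEq n e w r), Sprod n S w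

/-- The shifted permutation `1^k × w`: fixes `0, …, k-1` (0-indexed) and sends
`k + j` to `k + w j`. -/
def shiftPerm (k : ℕ) (w : Equiv.Perm ℕ) : Equiv.Perm ℕ where
  toFun j := if j < k then j else w (j - k) + k
  invFun j := if j < k then j else w⁻¹ (j - k) + k
  left_inv j := by
    dsimp only
    by_cases h : j < k
    · simp [h]
    · have h1 : ¬ w (j - k) + k < k := by omega
      simp only [if_neg h, if_neg h1, Nat.add_sub_cancel, ← Equiv.Perm.mul_apply, inv_mul_cancel,
        Equiv.Perm.one_apply]
      omega
  right_inv j := by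
    dsimp only
    by_cases h : j < k
    · simp [h]
    · have h1 : ¬ w⁻¹ (j - k) + k < k := by omega
      simp only [if_neg h, if_neg h1, Nat.add_sub_cancel, ← Equiv.Perm.mul_apply, mul_inv_cancel,
        Equiv.Perm.one_apply]
      omega

/-- The lace diagram `(1^k × w 1, …, 1^k × w n)`. -/
def shiftDiag (k : ℕ) (w : ℕ → Equiv.Perm ℕ) : ℕ → Equiv.Perm ℕ :=
  fun i => shiftPerm k (w i)

/-- The transformation of lace diagrams, allowed at `(i, j)` (0-indexed `j`,
so `j + 1 < e i`) when exactly one of the two descent conditions holds; it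
replaces `w i` by `w i * s j` and `w (i+1)` by `s j * w (i+1)`. -/
def TransStep (n : ℕ) (e : ℕ → ℕ) (w w' : ℕ → Equiv.Perm ℕ) : Prop :=
  IsLace n e w ∧ ∃ i j, 1 ≤ i ∧ i + 1 ≤ n ∧ j + 1 < e i ∧
    Xor' (w i (j + 1) < w i j) ((w (i + 1))⁻¹ (j + 1) < (w (i + 1))⁻¹ j) ∧
    w' = Function.update (Function.update w i (w i * Equiv.swap j (j + 1))) (i + 1)
          (Equiv.swap j (j + 1) * w (i + 1))

/-- The column where the strand through dot `q` of column `c` starts. -/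
def startCol (e : ℕ → ℕ) (w : ℕ → Equiv.Perm ℕ) : ℕ → ℕ → ℕ
  | 0, _ => 0
  | c + 1, q => if w (c + 1) q < e c then startCol e w c (w (c + 1) q) else c + 1

/-- The starting dot `(column, position)` of the strand through dot `q` of column `c`. -/
def startDot (e : ℕ → ℕ) (w : ℕ → Equiv.Perm ℕ) : ℕ → ℕ → ℕ × ℕ
  | 0, q => (0, q)
  | c + 1, q => if w (c + 1) q < e c then startDot e w c (w (c + 1) q) else (c + 1, q)

def endColAux (e : ℕ → ℕ) (w : ℕ → Equiv.Perm ℕ) : ℕ → ℕ → ℕ → ℕ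
  | 0, c, _ => c
  | f + 1, c, q =>
      if (w (c + 1))⁻¹ q < e (c + 1) then endColAux e w f (c + 1) ((w (c + 1))⁻¹ q) else c

/-- The column where the strand through dot `q` of column `c` terminates. -/
def endCol (n : ℕ) (e : ℕ → ℕ) (w : ℕ → Equiv.Perm ℕ) (c q : ℕ) : ℕ :=
  endColAux e w (n - c) c q

/-- `w` is the left-most lace diagram (for its rank conditions): it is a lace
diagram such that in every column the strands are sorted from top to bottom by
starting column (ascending) and then by terminating column (descending), exactly
as produced by the construction which adds, for `i = 0, …, n` and `j = n, …, i`,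
all strands from column `i` to column `j` to the bottom of the diagram; and
strands with the same start and end do not cross. -/
def IsLeftmost (n : ℕ) (e : ℕ → ℕ) (w : ℕ → Equiv.Perm ℕ) : Prop :=
  IsLace n e w ∧
  (∀ c, c ≤ n → ∀ q q', q < q' → q' < e c →
    startCol e w c q < startCol e w c q' ∨
      (startCol e w c q = startCol e w c q' ∧ endCol n e w c q' ≤ endCol n e w c q)) ∧
  (∀ c, 1 ≤ c → c ≤ n → ∀ q q', q < q' → q' < e c →
    startCol e w c q = startCol e w c q' → endCol n e w c q = endCol n e w c q' →
    w c q < w c q')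

/-- The substitution homomorphism `φ_u` of a lace diagram `u`: it sends the
variable `x^i_j` to the variable `b_S` of the strand `S` of `u` through dot
`(i, j)`, where the strand variables are realized as the variables indexed by
the starting dots of strands. -/
noncomputable def phiMap (e : ℕ → ℕ) (u : ℕ → Equiv.Perm ℕ) :
    MvPolynomial (ℕ × ℕ) ℤ →ₐ[ℤ] MvPolynomial (ℕ × ℕ) ℤ :=
  rename fun p => startDot e u p.1 p.2

/-- The product of the simple transpositions `s (i+1)` (1-indexed) for `i` in `l`. -/
def wordProd (l : List ℕ) : Equiv.Perm ℕ := (l.map fun i => Equiv.swap i (i + 1)).prod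

/-- A reduced word for a finitely supported permutation of ℕ. -/
def IsReducedWord (u : Equiv.Perm ℕ) (l : List ℕ) : Prop :=
  wordProd l = u ∧ l.length = ell u

/-- Bruhat order: some reduced word for `u` contains a subword which is a
reduced word for `w`. -/
def BruhatLE (w u : Equiv.Perm ℕ) : Prop :=
  ∃ l l', IsReducedWord u l ∧ IsReducedWord w l' ∧ l'.Sublist l

namespace KMS

attribute [local instance] Classical.propDecidable

def invSet (v : Equiv.Perm ℕ) : Set (ℕ × ℕ) := {p | p.1 < p.2 ∧ v p.2 < v p.1}

lemma ell_eq (v : Equiv.Perm ℕ) : ell v = (invSet v).ncard := rfl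

lemma swap_lt {j a b : ℕ} (h : a < b) (hne : ¬(a = j ∧ b = j + 1)) :
    Equiv.swap j (j + 1) a < Equiv.swap j (j + 1) b := by
  simp only [Equiv.swap_apply_def]
  split_ifs <;> omega

lemma swap_lt_iff {j m x : ℕ} (h : j + 1 < m) : Equiv.swap j (j + 1) x < m ↔ x < m := by
  simp only [Equiv.swap_apply_def]
  split_ifs <;> omega

lemma invSet_finite {v : Equiv.Perm ℕ} (hv : FinSupp v) : (invSet v).Finite := by
  obtain ⟨N, hN⟩ := hv.bddAbove
  simp only [mem_upperBounds, Set.mem_setOf_eq] at hN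
  have key : ∀ x, N + 1 ≤ x → v x = x := by
    intro x hx
    by_contra h
    have := hN x h
    omega
  have himg : ∀ a, a < N + 1 → v a < N + 1 := by
    intro a ha
    by_contra h
    push_neg at h
    have h2 : v (v a) = v a := key _ h
    have h3 : v a = a := v.injective h2
    omega
  apply Set.Finite.subset ((Set.finite_Iio (N + 1)).prod (Set.finite_Iio (N + 1)))
  rintro ⟨a, b⟩ ⟨h1, h2⟩
  simp only [Set.mem_prod, Set.mem_Iio]
  simp only at h1 h2
  have hb : b < N + 1 := by
    by_contra hb
    push_neg at hb
    have hvb : v b = b := key _ hb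
    rw [hvb] at h2
    rcases lt_or_ge a (N + 1) with ha | ha
    · have := himg a ha; omega
    · rw [key _ ha] at h2; omega
  exact ⟨by omega, hb⟩

lemma ell_def' (v : Equiv.Perm ℕ) : ell v = Nat.card (invSet v) := by
  rw [ell_eq, Nat.card_coe_set_eq]

lemma ell_inv (v : Equiv.Perm ℕ) : ell v⁻¹ = ell v := by
  rw [ell_def', ell_def']
  apply Nat.card_congr
  refine ⟨fun p => ⟨(v⁻¹ p.1.2, v⁻¹ p.1.1), ?_⟩, fun p => ⟨(v p.1.2, v p.1.1), ?_⟩, ?_, ?_⟩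
  · obtain ⟨⟨a, b⟩, h1, h2⟩ := p
    exact ⟨h2, by simpa using h1⟩
  · obtain ⟨⟨a, b⟩, h1, h2⟩ := p
    exact ⟨h2, by simpa using h1⟩
  · rintro ⟨⟨a, b⟩, h⟩; simp
  · rintro ⟨⟨a, b⟩, h⟩; simp

lemma finSupp_mul_swap {v : Equiv.Perm ℕ} (hv : FinSupp v) (j : ℕ) :
    FinSupp (v * Equiv.swap j (j + 1)) := by
  apply Set.Finite.subset (hv.union ((Set.finite_singleton j).insert (j + 1)))
  intro x hx
  simp only [Set.mem_setOf_eq, Equiv.Perm.mul_apply] at hx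
  by_contra hmem
  simp only [Set.mem_union, Set.mem_insert_iff, Set.mem_singleton_iff, Set.mem_setOf_eq] at hmem
  push_neg at hmem
  obtain ⟨h1, h2, h3⟩ := hmem
  rw [Equiv.swap_apply_of_ne_of_ne h3 (by omega : x ≠ j + 1)] at hx
  exact hx h1

lemma finSupp_swap_mul {v : Equiv.Perm ℕ} (hv : FinSupp v) (j : ℕ) :
    FinSupp (Equiv.swap j (j + 1) * v) := by
  apply Set.Finite.subset (hv.union ((Set.finite_singleton (v⁻¹ j)).insert (v⁻¹ (j + 1))))
  intro x hx
  simp only [Set.mem_setOf_eq, Equiv.Perm.mul_apply] at hx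
  by_contra hmem
  simp only [Set.mem_union, Set.mem_insert_iff, Set.mem_singleton_iff, Set.mem_setOf_eq] at hmem
  push_neg at hmem
  obtain ⟨h1, h2, h3⟩ := hmem
  have hj : v x ≠ j := fun h => h3 (by rw [← h]; simp)
  have hj1 : v x ≠ j + 1 := fun h => h2 (by rw [← h]; simp)
  rw [Equiv.swap_apply_of_ne_of_ne hj hj1] at hx
  exact hx h1

lemma ell_descent {v : Equiv.Perm ℕ} (hv : FinSupp v) {j : ℕ}
    (hd : v (j + 1) < v j) : ell (v * Equiv.swap j (j + 1)) + 1 = ell v := by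
  have hvs : FinSupp (v * Equiv.swap j (j + 1)) := finSupp_mul_swap hv j
  have hA := invSet_finite hvs
  have hB := invSet_finite hv
  rw [ell_eq, ell_eq, Set.ncard_eq_toFinset_card _ hA, Set.ncard_eq_toFinset_card _ hB]
  have hmem : (j, j + 1) ∈ hB.toFinset := by
    simp [invSet, hd]
  rw [← Finset.card_erase_add_one hmem]
  congr 1
  apply Finset.card_nbij' (fun p => (Equiv.swap j (j + 1) p.1, Equiv.swap j (j + 1) p.2))
      (fun p => (Equiv.swap j (j + 1) p.1, Equiv.swap j (j + 1) p.2))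
  · rintro ⟨a, b⟩ hab
    simp only [Finset.mem_coe, Set.Finite.mem_toFinset, invSet, Set.mem_setOf_eq, Equiv.Perm.mul_apply] at hab
    rw [Finset.mem_coe, Finset.mem_erase]
    constructor
    · intro hc
      have ha : a = j + 1 := by
        have := (Prod.ext_iff.1 hc).1
        have h2 := congrArg (Equiv.swap j (j + 1)) this
        simpa using h2
      have hb : b = j := by
        have := (Prod.ext_iff.1 hc).2
        have h2 := congrArg (Equiv.swap j (j + 1)) this
        simpa using h2
      omega
    · simp only [Set.Finite.mem_toFinset, invSet, Set.mem_setOf_eq]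
      refine ⟨?_, hab.2⟩
      apply swap_lt hab.1
      intro hc
      have := hab.2
      rw [hc.1, hc.2] at this
      simp only [Equiv.swap_apply_left, Equiv.swap_apply_right] at this
      omega
  · rintro ⟨a, b⟩ hab
    rw [Finset.mem_coe, Finset.mem_erase] at hab
    simp only [Finset.mem_coe, Set.Finite.mem_toFinset, invSet, Set.mem_setOf_eq] at hab ⊢
    obtain ⟨h1, h2⟩ := hab
    simp only [Equiv.Perm.mul_apply, Equiv.swap_apply_self]
    refine ⟨?_, h2.2⟩
    apply swap_lt h2.1
    intro hc
    exact h1 (by rw [hc.1, hc.2])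
  · rintro ⟨a, b⟩ _; simp
  · rintro ⟨a, b⟩ _; simp

lemma ell_ascent {v : Equiv.Perm ℕ} (hv : FinSupp v) {j : ℕ}
    (ha : v j < v (j + 1)) : ell (v * Equiv.swap j (j + 1)) = ell v + 1 := by
  have h1 : ell ((v * Equiv.swap j (j + 1)) * Equiv.swap j (j + 1)) + 1 =
      ell (v * Equiv.swap j (j + 1)) := by
    apply ell_descent (finSupp_mul_swap hv j)
    simpa using ha
  rw [mul_assoc, Equiv.swap_mul_self, mul_one] at h1
  omega

lemma mul_swap_inv (v : Equiv.Perm ℕ) (j : ℕ) :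
    (v * Equiv.swap j (j + 1))⁻¹ = Equiv.swap j (j + 1) * v⁻¹ := by
  rw [mul_inv_rev, Equiv.swap_inv]

lemma swap_mul_inv (v : Equiv.Perm ℕ) (j : ℕ) :
    (Equiv.swap j (j + 1) * v)⁻¹ = v⁻¹ * Equiv.swap j (j + 1) := by
  rw [mul_inv_rev, Equiv.swap_inv]

lemma finSupp_inv {v : Equiv.Perm ℕ} (hv : FinSupp v) : FinSupp v⁻¹ := by
  have : {x | v⁻¹ x ≠ x} = {x | v x ≠ x} := by
    ext x
    simp only [Set.mem_setOf_eq, ne_eq, Equiv.Perm.inv_eq_iff_eq]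
    constructor
    · intro h hc; exact h (by rw [hc])
    · intro h hc; exact h (by rw [← hc])
  unfold FinSupp
  rw [this]
  exact hv

lemma ell_swap_mul_descent {v : Equiv.Perm ℕ} (hv : FinSupp v) {j : ℕ}
    (hd : v⁻¹ (j + 1) < v⁻¹ j) : ell (Equiv.swap j (j + 1) * v) + 1 = ell v := by
  rw [← ell_inv (Equiv.swap j (j + 1) * v), swap_mul_inv, ← ell_inv v]
  exact ell_descent (finSupp_inv hv) hd

lemma ell_swap_mul_ascent {v : Equiv.Perm ℕ} (hv : FinSupp v) {j : ℕ}
    (ha : v⁻¹ j < v⁻¹ (j + 1)) : ell (Equiv.swap j (j + 1) * v) = ell v + 1 := by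
  rw [← ell_inv (Equiv.swap j (j + 1) * v), swap_mul_inv, ← ell_inv v]
  exact ell_ascent (finSupp_inv hv) ha

lemma descent_mul_swap {v : Equiv.Perm ℕ} {j k : ℕ}
    (h : (v * Equiv.swap j (j + 1)) (k + 1) < (v * Equiv.swap j (j + 1)) k) :
    v (k + 1) < v k ∨ (j ≤ k + 1 ∧ k ≤ j + 1) := by
  by_cases hk : j ≤ k + 1 ∧ k ≤ j + 1
  · right; exact hk
  · left
    simp only [Equiv.Perm.mul_apply] at h
    rw [Equiv.swap_apply_of_ne_of_ne (by omega) (by omega),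
      Equiv.swap_apply_of_ne_of_ne (by omega) (by omega)] at h
    exact h

lemma descent_swap_mul {v : Equiv.Perm ℕ} {j k : ℕ}
    (h : (Equiv.swap j (j + 1) * v) (k + 1) < (Equiv.swap j (j + 1) * v) k) :
    v (k + 1) < v k ∨ (v k = j ∧ v (k + 1) = j + 1) := by
  by_cases hx : v k = j ∧ v (k + 1) = j + 1
  · right; exact hx
  · left
    rcases lt_trichotomy (v (k + 1)) (v k) with h1 | h1 | h1
    · exact h1
    · exact absurd (v.injective h1) (by omega)
    · exfalso
      simp only [Equiv.Perm.mul_apply] at h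
      exact absurd (swap_lt h1 hx) (by omega)

end KMS
namespace KMS

attribute [local instance] Classical.propDecidable

variable {w : ℕ → Equiv.Perm ℕ} {e : ℕ → ℕ} {n : ℕ}

lemma chain_of_le {i k p : ℕ} (h : k ≤ i) : chain w i k p = p := by
  induction k with
  | zero => rfl
  | succ k ih => simp [chain, h]

lemma chain_succ {i k p : ℕ} (h : i ≤ k) : chain w i (k + 1) p = (w (k + 1))⁻¹ (chain w i k p) := by
  simp [chain, show ¬(k + 1 ≤ i) by omega]

lemma chain_chain {i k m p : ℕ} (hik : i ≤ k) (hkm : k ≤ m) :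
    chain w i m p = chain w k m (chain w i k p) := by
  induction m, hkm using Nat.le_induction with
  | base => rw [chain_of_le (le_refl k)]
  | succ m hm ih => rw [chain_succ (by omega), chain_succ (by omega), ih]

lemma chain_congr {w₂ : ℕ → Equiv.Perm ℕ} {i m p : ℕ}
    (h : ∀ t, i < t → t ≤ m → w t = w₂ t) : chain w i m p = chain w₂ i m p := by
  induction m with
  | zero => rfl
  | succ m ih =>
    by_cases hm : m + 1 ≤ i
    · rw [chain_of_le hm, chain_of_le hm]
    · rw [chain_succ (by omega), chain_succ (by omega), h (m+1) (by omega) (by omega),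
        ih (fun t ht htm => h t ht (by omega))]

lemma startDot_fst_le {c q : ℕ} : (startDot e w c q).1 ≤ c := by
  induction c generalizing q with
  | zero => simp [startDot]
  | succ c ih =>
    rw [startDot]
    split
    · exact le_trans ih (by omega)
    · simp

lemma startDot_snd_lt {c q : ℕ} (h : q < e c) :
    (startDot e w c q).2 < e (startDot e w c q).1 := by
  induction c generalizing q with
  | zero => simpa [startDot]
  | succ c ih =>
    rw [startDot]
    split
    · next hlt => exact ih hlt
    · simpa

lemma startDot_start {c q : ℕ} :
    (startDot e w c q).1 = 0 ∨
      e ((startDot e w c q).1 - 1) ≤ w (startDot e w c q).1 (startDot e w c q).2 := by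
  induction c generalizing q with
  | zero => simp [startDot]
  | succ c ih =>
    rw [startDot]
    split
    · exact ih
    · next h => right; simpa using not_lt.1 h

lemma startDot_chain {c q : ℕ} (h : q < e c) :
    chain w (startDot e w c q).1 c (startDot e w c q).2 = q ∧
      ∀ k, (startDot e w c q).1 ≤ k → k ≤ c → chain w (startDot e w c q).1 k (startDot e w c q).2 < e k := by
  induction c generalizing q with
  | zero =>
    refine ⟨rfl, fun k h1 h2 => ?_⟩
    simp only [startDot] at h1 h2 ⊢
    have : k = 0 := by omega
    subst this
    simpa [chain] using h
  | succ c ih =>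
    rw [startDot]
    split
    · next hlt =>
      obtain ⟨ih1, ih2⟩ := ih hlt
      have hfle : (startDot e w c (w (c+1) q)).1 ≤ c := startDot_fst_le
      constructor
      · rw [chain_succ (by omega), ih1]
        simp
      · intro k h1 h2
        rcases Nat.lt_succ_iff_lt_or_eq.1 (Nat.lt_succ_of_le h2) with h3 | h3
        · exact ih2 k h1 (by omega)
        · subst h3
          rw [chain_succ (by omega), ih1]
          simpa
    · next hge =>
      refine ⟨chain_of_le (le_refl _), fun k h1 h2 => ?_⟩
      have : k = c + 1 := by omega
      subst this
      rw [chain_of_le (le_refl _)]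
      exact h

lemma startDot_base {s q : ℕ} (hq : q < e s) (hs : s = 0 ∨ e (s - 1) ≤ w s q) :
    startDot e w s q = (s, q) := by
  cases s with
  | zero => rfl
  | succ t =>
    rcases hs with h | h
    · omega
    · rw [startDot, if_neg (by simpa using h)]

lemma startDot_of_chain {s q0 m : ℕ} (hq : q0 < e s) (hs : s = 0 ∨ e (s - 1) ≤ w s q0)
    (hm : s ≤ m) (hgood : ∀ k, s < k → k ≤ m → chain w s k q0 < e k) :
    startDot e w m (chain w s m q0) = (s, q0) := by
  induction m, hm using Nat.le_induction with
  | base => rw [chain_of_le (le_refl s)]; exact startDot_base hq hs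
  | succ m hsm ih =>
    have hv : w (m + 1) (chain w s (m + 1) q0) = chain w s m q0 := by
      rw [chain_succ hsm]; simp
    have hlt : chain w s m q0 < e m := by
      rcases Nat.eq_or_lt_of_le hsm with h | h
      · rw [← h, chain_of_le (le_refl s)]; exact hq
      · exact hgood m h (by omega)
    rw [startDot, if_pos (by rw [hv]; exact hlt), hv]
    exact ih (fun k h1 h2 => hgood k h1 (by omega))

/-! ### `dEnd` -/

noncomputable def dEnd (n : ℕ) (e : ℕ → ℕ) (w : ℕ → Equiv.Perm ℕ) (c q : ℕ) : ℕ :=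
  Nat.findGreatest (fun d => ∀ k, c < k → k ≤ d → chain w c k q < e k) n

lemma dEnd_le : dEnd n e w c q ≤ n := Nat.findGreatest_le n

lemma le_dEnd {c q : ℕ} (hc : c ≤ n) : c ≤ dEnd n e w c q :=
  Nat.le_findGreatest hc (fun k h1 h2 => by omega)

lemma good_dEnd {c q : ℕ} (hc : c ≤ n) :
    ∀ k, c < k → k ≤ dEnd n e w c q → chain w c k q < e k := by
  exact Nat.findGreatest_spec (P := fun d => ∀ k, c < k → k ≤ d → chain w c k q < e k)
    hc (fun k h1 h2 => by omega)

lemma le_dEnd_of_good {c q b : ℕ} (hb : b ≤ n)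
    (h : ∀ k, c < k → k ≤ b → chain w c k q < e k) : b ≤ dEnd n e w c q :=
  Nat.le_findGreatest hb h

lemma chain_dEnd_succ {c q : ℕ} (hc : c ≤ n) (h : dEnd n e w c q < n) :
    e (dEnd n e w c q + 1) ≤ chain w c (dEnd n e w c q + 1) q := by
  by_contra hcon
  push_neg at hcon
  have : dEnd n e w c q + 1 ≤ dEnd n e w c q := by
    apply le_dEnd_of_good (by omega)
    intro k h1 h2
    rcases Nat.lt_succ_iff_lt_or_eq.1 (Nat.lt_succ_of_le h2) with h3 | h3
    · exact good_dEnd hc k h1 (by omega)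
    · subst h3; exact hcon
  omega

lemma dEnd_step {c q : ℕ} (hc : c + 1 ≤ n) (hq : (w (c + 1))⁻¹ q < e (c + 1)) :
    dEnd n e w c q = dEnd n e w (c + 1) ((w (c + 1))⁻¹ q) := by
  set q' := (w (c + 1))⁻¹ q with hq'
  have hch : chain w c (c + 1) q = q' := by rw [chain_succ (by omega), chain_of_le (le_refl c)]
  have htrans : ∀ k, c + 1 ≤ k → chain w c k q = chain w (c + 1) k q' := by
    intro k hk
    rw [chain_chain (by omega : c ≤ c + 1) hk, hch]
  have h1 : c + 1 ≤ dEnd n e w c q := by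
    apply le_dEnd_of_good hc
    intro k hk1 hk2
    have : k = c + 1 := by omega
    subst this
    rw [hch]; exact hq
  apply le_antisymm
  · apply le_dEnd_of_good dEnd_le
    intro k hk1 hk2
    rw [← htrans k (by omega)]
    exact good_dEnd (by omega) k (by omega) hk2
  · apply le_dEnd_of_good dEnd_le
    intro k hk1 hk2
    rcases Nat.eq_or_lt_of_le (show c + 1 ≤ k by omega) with h | h
    · rw [← h, hch]; exact hq
    · rw [htrans k (by omega)]
      exact good_dEnd hc k h hk2

lemma dEnd_startDot {c q : ℕ} (hq : q < e c) (hc : c ≤ n) :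
    dEnd n e w (startDot e w c q).1 (startDot e w c q).2 = dEnd n e w c q := by
  induction c generalizing q with
  | zero => rfl
  | succ c ih =>
    rw [startDot]
    split
    · next hlt =>
      rw [ih hlt (by omega)]
      have : q = (w (c+1))⁻¹ (w (c+1) q) := by simp
      rw [dEnd_step (by omega) (by simpa using hq)]
      simp
    · rfl

end KMS
namespace KMS

attribute [local instance] Classical.propDecidable

/-! ### rank as a Finset card of strands -/

noncomputable def rankFinset (e : ℕ → ℕ) (w : ℕ → Equiv.Perm ℕ) (a b : ℕ) : Finset ℕ :=
  (Finset.range (e a)).filter (fun p => ∀ k, a < k → k ≤ b → chain w a k p < e k)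

lemma rank_eq_filter (e : ℕ → ℕ) (w : ℕ → Equiv.Perm ℕ) (a b : ℕ) :
    rank e w a b = (rankFinset e w a b).card := by
  rw [rank, ← Set.ncard_coe_finset]
  congr 1
  ext p
  simp [rankFinset, and_comm]

noncomputable def allStarts (n : ℕ) (e : ℕ → ℕ) (w : ℕ → Equiv.Perm ℕ) : Finset (ℕ × ℕ) :=
  ((Finset.range (n + 1)) ×ˢ (Finset.range ((Finset.range (n + 1)).sup e))).filter
    (fun σ => σ.2 < e σ.1 ∧ (σ.1 = 0 ∨ e (σ.1 - 1) ≤ w σ.1 σ.2))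

lemma mem_allStarts {σ : ℕ × ℕ} :
    σ ∈ allStarts n e w ↔ σ.1 ≤ n ∧ σ.2 < e σ.1 ∧ (σ.1 = 0 ∨ e (σ.1 - 1) ≤ w σ.1 σ.2) := by
  simp only [allStarts, Finset.mem_filter, Finset.mem_product, Finset.mem_range]
  constructor
  · rintro ⟨⟨h1, _⟩, h3, h4⟩
    exact ⟨by omega, h3, h4⟩
  · rintro ⟨h1, h3, h4⟩
    refine ⟨⟨by omega, ?_⟩, h3, h4⟩
    calc σ.2 < e σ.1 := h3
    _ ≤ (Finset.range (n + 1)).sup e := Finset.le_sup (Finset.mem_range.2 (by omega))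

lemma startDot_mem_allStarts {c q : ℕ} (hq : q < e c) (hc : c ≤ n) :
    startDot e w c q ∈ allStarts n e w :=
  mem_allStarts.2 ⟨le_trans startDot_fst_le hc, startDot_snd_lt hq, startDot_start⟩

noncomputable def SRank (n : ℕ) (e : ℕ → ℕ) (w : ℕ → Equiv.Perm ℕ) (a b : ℕ) : Finset (ℕ × ℕ) :=
  (allStarts n e w).filter (fun σ => σ.1 ≤ a ∧ b ≤ dEnd n e w σ.1 σ.2)

lemma rank_eq_card {a b : ℕ} (hab : a ≤ b) (hbn : b ≤ n) :
    rank e w a b = (SRank n e w a b).card := by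
  rw [rank_eq_filter]
  apply Finset.card_nbij' (fun q => startDot e w a q) (fun σ => chain w σ.1 a σ.2)
  · intro q hq
    simp only [Finset.mem_coe, rankFinset, Finset.mem_filter, Finset.mem_range] at hq
    obtain ⟨hq1, hq2⟩ := hq
    simp only [Finset.mem_coe, SRank, Finset.mem_filter]
    refine ⟨startDot_mem_allStarts hq1 (by omega), startDot_fst_le, ?_⟩
    rw [dEnd_startDot hq1 (by omega)]
    exact le_dEnd_of_good hbn hq2
  · intro σ hσ
    simp only [Finset.mem_coe, SRank, Finset.mem_filter] at hσ
    obtain ⟨hmem, hs1, hs2⟩ := hσ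
    rw [mem_allStarts] at hmem
    obtain ⟨hn1, hn2, _⟩ := hmem
    have hgood := good_dEnd (w := w) (e := e) (c := σ.1) (q := σ.2) hn1
    have hqa : chain w σ.1 a σ.2 < e a := by
      rcases Nat.eq_or_lt_of_le hs1 with h | h
      · rw [← h, chain_of_le (le_refl _)]; exact hn2
      · exact hgood a h (by omega)
    simp only [Finset.mem_coe, rankFinset, Finset.mem_filter, Finset.mem_range]
    refine ⟨hqa, fun k h1 h2 => ?_⟩
    rw [← chain_chain hs1 (by omega)]
    exact hgood k (by omega) (by omega)
  · intro q hq
    simp only [Finset.mem_coe, rankFinset, Finset.mem_filter, Finset.mem_range] at hq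
    exact (startDot_chain hq.1).1
  · intro σ hσ
    simp only [Finset.mem_coe, SRank, Finset.mem_filter] at hσ
    obtain ⟨hmem, hs1, hs2⟩ := hσ
    rw [mem_allStarts] at hmem
    obtain ⟨hn1, hn2, hn3⟩ := hmem
    have hgood := good_dEnd (w := w) (e := e) (c := σ.1) (q := σ.2) hn1
    dsimp only
    rw [startDot_of_chain hn2 hn3 hs1 (fun k h1 h2 => hgood k h1 (by omega))]

/-! ### codim as the number of forced pairs -/

noncomputable def pairsP (n : ℕ) (e : ℕ → ℕ) (w : ℕ → Equiv.Perm ℕ) :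
    Finset ((ℕ × ℕ) × (ℕ × ℕ)) :=
  ((allStarts n e w) ×ˢ (allStarts n e w)).filter (fun στ =>
    στ.1.1 < στ.2.1 ∧ στ.2.1 ≤ dEnd n e w στ.1.1 στ.1.2 + 1 ∧
      dEnd n e w στ.1.1 στ.1.2 < dEnd n e w στ.2.1 στ.2.2)

lemma codim_eq_card (n : ℕ) (e : ℕ → ℕ) (w : ℕ → Equiv.Perm ℕ) :
    codim n (rank e w) = (pairsP n e w).card := by
  classical
  set T : Finset (ℕ × ℕ) :=
    ((Finset.range (n + 1)) ×ˢ (Finset.range (n + 1))).filter (fun ij => ij.1 < ij.2) with hT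
  have hcodim : codim n (rank e w) =
      ∑ ij ∈ T, (rank e w ij.1 (ij.2 - 1) - rank e w ij.1 ij.2) *
        (rank e w (ij.1 + 1) ij.2 - rank e w ij.1 ij.2) := by
    rw [codim, ← Finset.sum_product', hT, Finset.sum_filter]
  rw [hcodim]
  have hfib : ∀ στ ∈ pairsP n e w,
      (στ.2.1 - 1, dEnd n e w στ.1.1 στ.1.2 + 1) ∈ T := by
    rintro ⟨σ, τ⟩ hp
    simp only [pairsP, Finset.mem_filter, Finset.mem_product] at hp
    obtain ⟨⟨hσ, hτ⟩, h1, h2, h3⟩ := hp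
    have hσn : σ.1 ≤ n := (mem_allStarts.1 hσ).1
    have hτn : τ.1 ≤ n := (mem_allStarts.1 hτ).1
    have hdσ : dEnd n e w σ.1 σ.2 < n := lt_of_lt_of_le h3 dEnd_le
    simp only [hT, Finset.mem_filter, Finset.mem_product, Finset.mem_range]
    omega
  rw [Finset.card_eq_sum_card_fiberwise hfib]
  apply Finset.sum_congr rfl
  rintro ⟨i, j⟩ hij
  simp only [hT, Finset.mem_filter, Finset.mem_product, Finset.mem_range] at hij
  obtain ⟨⟨hi, hjn⟩, hij2⟩ := hij
  have hfil : (pairsP n e w).filter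
        (fun στ => (στ.2.1 - 1, dEnd n e w στ.1.1 στ.1.2 + 1) = (i, j)) =
      ((allStarts n e w).filter (fun σ => σ.1 ≤ i ∧ dEnd n e w σ.1 σ.2 + 1 = j)) ×ˢ
        ((allStarts n e w).filter (fun τ => τ.1 = i + 1 ∧ j ≤ dEnd n e w τ.1 τ.2)) := by
    ext ⟨σ, τ⟩
    simp only [Finset.mem_filter, pairsP, Finset.mem_product, Prod.mk.injEq]
    constructor
    · rintro ⟨⟨⟨hσ, hτ⟩, h1, h2, h3⟩, h4, h5⟩
      refine ⟨⟨hσ, by omega, h5⟩, hτ, by omega, by omega⟩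
    · rintro ⟨⟨hσ, h4, h5⟩, hτ, h6, h7⟩
      refine ⟨⟨⟨hσ, hτ⟩, by omega, by omega, by omega⟩, by omega, by omega⟩
  rw [hfil, Finset.card_product]
  have hr1 : rank e w i (j - 1) - rank e w i j =
      ((allStarts n e w).filter (fun σ => σ.1 ≤ i ∧ dEnd n e w σ.1 σ.2 + 1 = j)).card := by
    rw [rank_eq_card (n := n) (by omega) (by omega), rank_eq_card (n := n) (by omega) (by omega),
      ← Finset.card_sdiff_of_subset (by
        intro σ hσ
        simp only [SRank, Finset.mem_filter] at hσ ⊢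
        exact ⟨hσ.1, hσ.2.1, by omega⟩)]
    congr 1
    ext σ
    simp only [Finset.mem_sdiff, SRank, Finset.mem_filter]
    constructor
    · rintro ⟨⟨h1, h2, h3⟩, h4⟩
      refine ⟨h1, h2, ?_⟩
      by_contra hc
      exact h4 ⟨h1, h2, by omega⟩
    · rintro ⟨h1, h2, h3⟩
      refine ⟨⟨h1, h2, by omega⟩, ?_⟩
      rintro ⟨_, _, h6⟩
      omega
  have hr2 : rank e w (i + 1) j - rank e w i j =
      ((allStarts n e w).filter (fun τ => τ.1 = i + 1 ∧ j ≤ dEnd n e w τ.1 τ.2)).card := by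
    rw [rank_eq_card (n := n) (by omega) (by omega), rank_eq_card (n := n) (by omega) (by omega),
      ← Finset.card_sdiff_of_subset (by
        intro σ hσ
        simp only [SRank, Finset.mem_filter] at hσ ⊢
        exact ⟨hσ.1, by omega, hσ.2.2⟩)]
    congr 1
    ext σ
    simp only [Finset.mem_sdiff, SRank, Finset.mem_filter]
    constructor
    · rintro ⟨⟨h1, h2, h3⟩, h4⟩
      refine ⟨h1, ?_, h3⟩
      by_contra hc
      exact h4 ⟨h1, by omega, h3⟩
    · rintro ⟨h1, h2, h3⟩
      refine ⟨⟨h1, by omega, h3⟩, ?_⟩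
      rintro ⟨_, h5, _⟩
      omega
  rw [hr1, hr2]

end KMS
namespace KMS

attribute [local instance] Classical.propDecidable

noncomputable def invFinset (v : Equiv.Perm ℕ) : Finset (ℕ × ℕ) :=
  if h : (invSet v).Finite then h.toFinset else ∅

lemma mem_invFinset {v : Equiv.Perm ℕ} (hv : FinSupp v) {p : ℕ × ℕ} :
    p ∈ invFinset v ↔ p ∈ invSet v := by
  rw [invFinset, dif_pos (invSet_finite hv)]
  exact Set.Finite.mem_toFinset _

lemma card_invFinset {v : Equiv.Perm ℕ} (hv : FinSupp v) : (invFinset v).card = ell v := by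
  rw [invFinset, dif_pos (invSet_finite hv), ell_eq, Set.ncard_eq_toFinset_card _ (invSet_finite hv)]

/-- The predicate for locating the forced crossing of a forced pair. -/
def Qpred (w : ℕ → Equiv.Perm ℕ) (στ : (ℕ × ℕ) × (ℕ × ℕ)) (k : ℕ) : Prop :=
  στ.2.1 ≤ k ∧ chain w στ.2.1 k στ.2.2 < chain w στ.1.1 k στ.1.2

noncomputable def wit (w : ℕ → Equiv.Perm ℕ) (στ : (ℕ × ℕ) × (ℕ × ℕ)) : ℕ :=
  if h : ∃ k, Qpred w στ k then Nat.find h else 0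

lemma pairsP_facts {n : ℕ} {e : ℕ → ℕ} {w : ℕ → Equiv.Perm ℕ} {στ : (ℕ × ℕ) × (ℕ × ℕ)}
    (hp : στ ∈ pairsP n e w) :
    Qpred w στ (wit w στ) ∧ wit w στ ≤ dEnd n e w στ.1.1 στ.1.2 + 1 ∧
      ∀ k, k < wit w στ → ¬Qpred w στ k := by
  obtain ⟨σ, τ⟩ := στ
  simp only [pairsP, Finset.mem_filter, Finset.mem_product] at hp
  obtain ⟨⟨hσ, hτ⟩, h1, h2, h3⟩ := hp
  rw [mem_allStarts] at hσ hτ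
  obtain ⟨hσn, hσe, hσs⟩ := hσ
  obtain ⟨hτn, hτe, hτs⟩ := hτ
  set d := dEnd n e w σ.1 σ.2 with hd
  have hdn : d < n := lt_of_lt_of_le h3 dEnd_le
  have hQ : Qpred w (σ, τ) (d + 1) := by
    refine ⟨h2, ?_⟩
    show chain w τ.1 (d + 1) τ.2 < chain w σ.1 (d + 1) σ.2
    have hS : e (d + 1) ≤ chain w σ.1 (d + 1) σ.2 := chain_dEnd_succ hσn hdn
    have hT : chain w τ.1 (d + 1) τ.2 < e (d + 1) := by
      rcases Nat.eq_or_lt_of_le h2 with h | h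
      · rw [h, chain_of_le (le_refl _)]
        rw [← h]; exact hτe
      · exact good_dEnd hτn (d + 1) h (by omega)
    omega
  have hex : ∃ k, Qpred w (σ, τ) k := ⟨d + 1, hQ⟩
  rw [wit, dif_pos hex]
  exact ⟨Nat.find_spec hex, Nat.find_min' hex hQ, fun k hk => Nat.find_min hex hk⟩

/-- The witness map from forced pairs to crossings. -/
noncomputable def Fmap (w : ℕ → Equiv.Perm ℕ) (στ : (ℕ × ℕ) × (ℕ × ℕ)) : ℕ × (ℕ × ℕ) :=
  (wit w στ, (chain w στ.2.1 (wit w στ) στ.2.2, chain w στ.1.1 (wit w στ) στ.1.2))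

lemma Fmap_spec {n : ℕ} {e : ℕ → ℕ} {w : ℕ → Equiv.Perm ℕ} {στ : (ℕ × ℕ) × (ℕ × ℕ)}
    (hp : στ ∈ pairsP n e w) :
    1 ≤ (Fmap w στ).1 ∧ (Fmap w στ).1 ≤ n ∧
    (Fmap w στ).2 ∈ invSet (w (Fmap w στ).1) ∧
    startDot e w ((Fmap w στ).1 - 1) (w (Fmap w στ).1 (Fmap w στ).2.2) = στ.1 ∧
    startDot e w (Fmap w στ).1 (Fmap w στ).2.1 = στ.2 := by
  obtain ⟨hQ, hle0, hmin0⟩ := pairsP_facts hp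
  obtain ⟨σ, τ⟩ := στ
  have hck0 : τ.1 ≤ wit w (σ, τ) := hQ.1
  have hlt : chain w τ.1 (wit w (σ, τ)) τ.2 < chain w σ.1 (wit w (σ, τ)) σ.2 := hQ.2
  have hle : wit w (σ, τ) ≤ dEnd n e w σ.1 σ.2 + 1 := hle0
  have hmin : ∀ k, k < wit w (σ, τ) → τ.1 ≤ k →
      ¬(chain w τ.1 k τ.2 < chain w σ.1 k σ.2) :=
    fun k hk hck hc => hmin0 k hk ⟨hck, hc⟩
  simp only [pairsP, Finset.mem_filter, Finset.mem_product] at hp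
  obtain ⟨⟨hσ, hτ⟩, h1, h2, h3⟩ := hp
  rw [mem_allStarts] at hσ hτ
  obtain ⟨hσn, hσe, hσs⟩ := hσ
  obtain ⟨hτn, hτe, hτs⟩ := hτ
  set k0 := wit w (σ, τ) with hk0
  set d := dEnd n e w σ.1 σ.2 with hd
  have hdn : d < n := lt_of_lt_of_le h3 dEnd_le
  have hk0n : k0 ≤ n := by omega
  have hc1 : 1 ≤ τ.1 := by omega
  have h1k0 : 1 ≤ k0 := by omega
  have hσgood := good_dEnd (w := w) (e := e) (c := σ.1) (q := σ.2) hσn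
  have hτgood := good_dEnd (w := w) (e := e) (c := τ.1) (q := τ.2) hτn
  have hbchain : w k0 (chain w σ.1 k0 σ.2) = chain w σ.1 (k0 - 1) σ.2 := by
    have hh : chain w σ.1 k0 σ.2 = (w k0)⁻¹ (chain w σ.1 (k0 - 1) σ.2) := by
      have h4 : k0 = (k0 - 1) + 1 := by omega
      conv_lhs => rw [h4, chain_succ (by omega)]
      rw [← h4]
    rw [hh]
    simp
  have hSlt : chain w σ.1 (k0 - 1) σ.2 < e (k0 - 1) := by
    rcases Nat.eq_or_lt_of_le (show σ.1 ≤ k0 - 1 by omega) with h | h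
    · rw [← h, chain_of_le (le_refl _)]; exact hσe
    · exact hσgood (k0 - 1) h (by omega)
  have hinv : w k0 (chain w σ.1 k0 σ.2) < w k0 (chain w τ.1 k0 τ.2) := by
    rcases Nat.eq_or_lt_of_le hck0 with h | h
    · -- k0 = τ.1 : the τ strand starts here
      have hτq : chain w τ.1 k0 τ.2 = τ.2 := by rw [← h, chain_of_le (le_refl _)]
      rw [hτq, hbchain]
      rcases hτs with h0 | hges
      · omega
      · have h5 : e (k0 - 1) ≤ w k0 τ.2 := by rw [← h]; exact hges
        omega
    · -- k0 > τ.1 : minimality of k0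
      have hachain : w k0 (chain w τ.1 k0 τ.2) = chain w τ.1 (k0 - 1) τ.2 := by
        have hh : chain w τ.1 k0 τ.2 = (w k0)⁻¹ (chain w τ.1 (k0 - 1) τ.2) := by
          have h4 : k0 = (k0 - 1) + 1 := by omega
          conv_lhs => rw [h4, chain_succ (by omega)]
          rw [← h4]
        rw [hh]
        simp
      rw [hachain, hbchain]
      have hge := hmin (k0 - 1) (by omega) (by omega)
      push_neg at hge
      rcases Nat.eq_or_lt_of_le hge with heq | hlt2
      · exfalso
        have hcc : chain w σ.1 k0 σ.2 = chain w τ.1 k0 τ.2 := by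
          have hhσ : k0 = (k0 - 1) + 1 := by omega
          conv_lhs => rw [hhσ, chain_succ (by omega)]
          conv_rhs => rw [hhσ, chain_succ (by omega)]
          rw [heq]
        omega
      · exact hlt2
  refine ⟨h1k0, hk0n, ⟨hlt, hinv⟩, ?_, ?_⟩
  · -- recover σ
    show startDot e w (k0 - 1) (w k0 (chain w σ.1 k0 σ.2)) = σ
    rw [hbchain]
    have := startDot_of_chain (w := w) hσe hσs (show σ.1 ≤ k0 - 1 by omega)
      (fun k hk1 hk2 => hσgood k hk1 (by omega))
    rw [this]
  · -- recover τ
    show startDot e w k0 (chain w τ.1 k0 τ.2) = τ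
    have hk0dτ : k0 ≤ dEnd n e w τ.1 τ.2 := by omega
    exact startDot_of_chain (w := w) hτe hτs hck0
      (fun k hk1 hk2 => hτgood k hk1 (by omega))

theorem lower_bound {n : ℕ} {e : ℕ → ℕ} {w : ℕ → Equiv.Perm ℕ} (hl : IsLace n e w) :
    codim n (rank e w) ≤ diagLength n w := by
  rw [codim_eq_card]
  have htarget : diagLength n w =
      ((Finset.Icc 1 n).biUnion (fun k => ({k} : Finset ℕ) ×ˢ invFinset (w k))).card := by
    rw [Finset.card_biUnion]
    · rw [diagLength]
      apply Finset.sum_congr rfl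
      intro k hk
      rw [Finset.mem_Icc] at hk
      rw [Finset.card_product, Finset.card_singleton, one_mul,
        card_invFinset ((hl.2 k hk.1 hk.2).1)]
    · intro x hx y hy hxy
      simp only [Finset.disjoint_left, Finset.mem_product, Finset.mem_singleton]
      rintro ⟨a, b⟩ ⟨ha, _⟩ ⟨hb, _⟩
      exact hxy (by rw [← ha, ← hb])
  rw [htarget]
  apply Finset.card_le_card_of_injOn (Fmap w)
  · intro στ hp
    obtain ⟨hf1, hf2, hf3, _, _⟩ := Fmap_spec hp
    simp only [Finset.mem_coe, Finset.mem_biUnion, Finset.mem_Icc, Finset.mem_product, Finset.mem_singleton]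
    refine ⟨(Fmap w στ).1, ⟨hf1, hf2⟩, rfl, ?_⟩
    rw [mem_invFinset ((hl.2 _ hf1 hf2).1)]
    exact hf3
  · intro στ hp στ' hp' heq
    simp only [Finset.mem_coe] at hp hp'
    obtain ⟨_, _, _, hσ, hτ⟩ := Fmap_spec hp
    obtain ⟨_, _, _, hσ', hτ'⟩ := Fmap_spec hp'
    have hfst : στ.1 = στ'.1 := by rw [← hσ, ← hσ', heq]
    have hsnd : στ.2 = στ'.2 := by rw [← hτ, ← hτ', heq]
    exact Prod.ext hfst hsnd

end KMS
namespace KMS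

attribute [local instance] Classical.propDecidable

variable {n : ℕ} {e : ℕ → ℕ} {w : ℕ → Equiv.Perm ℕ} {i j a b m p : ℕ}

lemma chain_upd_at {u : Equiv.Perm ℕ} (ha : a < i) :
    chain (Function.update w i u) a i p = u⁻¹ (w i (chain w a i p)) := by
  obtain ⟨i', rfl⟩ : ∃ i', i = i' + 1 := ⟨i - 1, by omega⟩
  rw [chain_succ (by omega), chain_succ (by omega)]
  have hlt : chain (Function.update w (i' + 1) u) a i' p = chain w a i' p :=
    chain_congr (fun t ht1 ht2 => Function.update_of_ne (by omega) _ _)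
  rw [hlt, Function.update_self]
  simp

lemma chain_upd_gt {u : Equiv.Perm ℕ} (ha : a < i) (hm : i ≤ m) :
    chain (Function.update w i u) a m p = chain w i m (u⁻¹ (w i (chain w a i p))) := by
  rw [chain_chain (show a ≤ i by omega) hm, chain_upd_at ha]
  exact chain_congr fun t ht1 ht2 => Function.update_of_ne (by omega) _ _

lemma chain_updB_ge {u : Equiv.Perm ℕ} (ha : a ≤ i) (hm : i + 1 ≤ m) :
    chain (Function.update w (i + 1) u) a m p = chain w (i + 1) m (u⁻¹ (chain w a i p)) := by
  rw [chain_chain (show a ≤ i + 1 by omega) hm]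
  have h1 : chain (Function.update w (i + 1) u) a (i + 1) p = u⁻¹ (chain w a i p) := by
    rw [chain_succ (by omega), Function.update_self]
    congr 1
    exact chain_congr fun t ht1 ht2 => Function.update_of_ne (by omega) _ _
  rw [h1]
  exact chain_congr fun t ht1 ht2 => Function.update_of_ne (by omega) _ _

lemma chain_back (ha : a < i) : w i (chain w a i p) = chain w a (i - 1) p := by
  obtain ⟨i', rfl⟩ : ∃ i', i = i' + 1 := ⟨i - 1, by omega⟩
  rw [chain_succ (by omega)]
  simp

lemma filter_card_swap {m jj : ℕ} (hjm : jj + 1 < m) (P : ℕ → Prop) :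
    ((Finset.range m).filter (fun p => P (Equiv.swap jj (jj + 1) p))).card =
      ((Finset.range m).filter P).card := by
  apply Finset.card_nbij' (fun p => Equiv.swap jj (jj + 1) p) (fun p => Equiv.swap jj (jj + 1) p)
  · intro p hp
    simp only [Finset.mem_coe, Finset.mem_filter, Finset.mem_range] at hp ⊢
    exact ⟨(swap_lt_iff hjm).2 hp.1, hp.2⟩
  · intro q hq
    simp only [Finset.mem_coe, Finset.mem_filter, Finset.mem_range] at hq ⊢
    refine ⟨(swap_lt_iff hjm).2 hq.1, ?_⟩
    rw [Equiv.swap_apply_self]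
    exact hq.2
  · intro p _; exact Equiv.swap_apply_self _ _ _
  · intro q _; exact Equiv.swap_apply_self _ _ _

/-- Rank is unchanged when removing the crossing `(i, j)` in the bad case A. -/
lemma rank_transform_A (hi1 : 1 ≤ i) (hj : j + 1 < e i)
    (hbad : e (i + 1) ≤ (w (i + 1))⁻¹ j)
    (hbad1 : (w (i + 1))⁻¹ (j + 1) = (w (i + 1))⁻¹ j + 1) (a b : ℕ) :
    rank e (Function.update w i (w i * Equiv.swap j (j + 1))) a b = rank e w a b := by
  have hsinv : (w i * Equiv.swap j (j + 1))⁻¹ = Equiv.swap j (j + 1) * (w i)⁻¹ :=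
    mul_swap_inv _ _
  rcases lt_or_ge a i with ha | ha
  swap
  · -- i ≤ a : chains agree everywhere
    rw [rank_eq_filter, rank_eq_filter]
    congr 1
    apply Finset.filter_congr
    intro p _
    have hch : ∀ k, chain (Function.update w i (w i * Equiv.swap j (j + 1))) a k p
        = chain w a k p :=
      fun k => chain_congr fun t ht1 ht2 => Function.update_of_ne (by omega) _ _
    simp only [hch]
  · -- a < i
    have hat : ∀ p, chain (Function.update w i (w i * Equiv.swap j (j + 1))) a i p
        = Equiv.swap j (j + 1) (chain w a i p) := by
      intro p
      rw [chain_upd_at ha, hsinv]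
      simp
    rw [rank_eq_filter, rank_eq_filter]
    congr 1
    apply Finset.filter_congr
    intro p hp
    simp only [Finset.mem_range] at hp
    by_cases hxb : i + 1 ≤ b
    · by_cases hx : chain w a i p = j ∨ chain w a i p = j + 1
      · -- both predicates fail at column i + 1
        have hchA : chain (Function.update w i (w i * Equiv.swap j (j + 1))) a (i + 1) p =
            (w (i + 1))⁻¹ (Equiv.swap j (j + 1) (chain w a i p)) := by
          rw [chain_succ (by omega), Function.update_of_ne (by omega), hat]
        have hchW : chain w a (i + 1) p = (w (i + 1))⁻¹ (chain w a i p) :=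
          chain_succ (by omega)
        apply iff_of_false
        · intro hgood
          have h1 := hgood (i + 1) (by omega) hxb
          rw [hchA] at h1
          rcases hx with hx | hx <;> rw [hx] at h1
          · rw [Equiv.swap_apply_left, hbad1] at h1; omega
          · rw [Equiv.swap_apply_right] at h1; omega
        · intro hgood
          have h1 := hgood (i + 1) (by omega) hxb
          rw [hchW] at h1
          rcases hx with hx | hx <;> rw [hx] at h1
          · omega
          · rw [hbad1] at h1; omega
      · -- chains agree everywhere
        push_neg at hx
        have hxx : Equiv.swap j (j + 1) (chain w a i p) = chain w a i p :=
          Equiv.swap_apply_of_ne_of_ne hx.1 hx.2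
        have hpt : ∀ k, chain (Function.update w i (w i * Equiv.swap j (j + 1))) a k p
            = chain w a k p := by
          intro k
          rcases lt_trichotomy k i with h | h | h
          · exact chain_congr fun t ht1 ht2 => Function.update_of_ne (by omega) _ _
          · rw [h, hat, hxx]
          · rw [chain_upd_gt ha (by omega), hsinv]
            simp only [Equiv.Perm.mul_apply, Equiv.Perm.inv_def, Equiv.symm_apply_apply]
            rw [hxx, ← chain_chain (by omega) (by omega)]
        simp only [hpt]
    · -- b ≤ i : only columns up to i matter
      have hlow : ∀ k, k < i → chain (Function.update w i (w i * Equiv.swap j (j + 1))) a k p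
          = chain w a k p :=
        fun k hk => chain_congr fun t ht1 ht2 => Function.update_of_ne (by omega) _ _
      constructor
      · intro h k hk1 hk2
        have h1 := h k hk1 hk2
        rcases eq_or_lt_of_le (show k ≤ i by omega) with hki | hki
        · rw [hki] at h1 ⊢
          rw [hat] at h1
          exact (swap_lt_iff hj).1 h1
        · rwa [hlow k hki] at h1
      · intro h k hk1 hk2
        have h1 := h k hk1 hk2
        rcases eq_or_lt_of_le (show k ≤ i by omega) with hki | hki
        · rw [hki] at h1 ⊢
          rw [hat]
          exact (swap_lt_iff hj).2 h1
        · rwa [hlow k hki]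

/-- Rank is unchanged when removing the crossing `(i+1, j)` in the bad case B. -/
lemma rank_transform_B (hi1 : 1 ≤ i) (hj : j + 1 < e i)
    (hbad : e (i - 1) ≤ w i j) (hbad1 : w i (j + 1) = w i j + 1) (a b : ℕ) :
    rank e (Function.update w (i + 1) (Equiv.swap j (j + 1) * w (i + 1))) a b
      = rank e w a b := by
  have hsinv : (Equiv.swap j (j + 1) * w (i + 1))⁻¹ = (w (i + 1))⁻¹ * Equiv.swap j (j + 1) :=
    swap_mul_inv _ _
  rcases lt_or_ge a (i + 1) with ha | ha
  swap
  · rw [rank_eq_filter, rank_eq_filter]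
    congr 1
    apply Finset.filter_congr
    intro p _
    have hch : ∀ k, chain (Function.update w (i + 1) (Equiv.swap j (j + 1) * w (i + 1))) a k p
        = chain w a k p :=
      fun k => chain_congr fun t ht1 ht2 => Function.update_of_ne (by omega) _ _
    simp only [hch]
  rcases eq_or_lt_of_le (show a ≤ i by omega) with hai | hai
  · -- a = i : relabel the dots of column i by the swap
    subst hai
    have hpt : ∀ p k, a < k → k ≤ b →
        chain (Function.update w (a + 1) (Equiv.swap j (j + 1) * w (a + 1))) a k p
          = chain w a k (Equiv.swap j (j + 1) p) := by
      intro p k hk1 hk2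
      rw [chain_updB_ge (le_refl a) (by omega), hsinv]
      rw [chain_chain (show a ≤ a + 1 by omega) (show a + 1 ≤ k by omega),
        chain_succ (le_refl a), chain_of_le (le_refl a), chain_of_le (le_refl a)]
      simp
    rw [rank_eq_filter, rank_eq_filter, rankFinset, rankFinset]
    have heq : (Finset.range (e a)).filter
          (fun p => ∀ k, a < k → k ≤ b →
            chain (Function.update w (a + 1) (Equiv.swap j (j + 1) * w (a + 1))) a k p < e k) =
        (Finset.range (e a)).filter
          (fun p => (fun q => ∀ k, a < k → k ≤ b → chain w a k q < e k)
            (Equiv.swap j (j + 1) p)) := by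
      apply Finset.filter_congr
      intro p _
      constructor
      · intro h k hk1 hk2; rw [← hpt p k hk1 hk2]; exact h k hk1 hk2
      · intro h k hk1 hk2; rw [hpt p k hk1 hk2]; exact h k hk1 hk2
    rw [heq]
    exact filter_card_swap hj (fun q => ∀ k, a < k → k ≤ b → chain w a k q < e k)
  · -- a < i
    have hlow : ∀ p k, k ≤ i →
        chain (Function.update w (i + 1) (Equiv.swap j (j + 1) * w (i + 1))) a k p
          = chain w a k p :=
      fun p k hk => chain_congr fun t ht1 ht2 => Function.update_of_ne (by omega) _ _
    rw [rank_eq_filter, rank_eq_filter]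
    congr 1
    apply Finset.filter_congr
    intro p hp
    simp only [Finset.mem_range] at hp
    by_cases hxb : i + 1 ≤ b
    · by_cases hx : chain w a i p = j ∨ chain w a i p = j + 1
      · -- the strand was dead at column i - 1 already
        have hdead : e (i - 1) ≤ chain w a (i - 1) p := by
          rw [← chain_back hai]
          rcases hx with hx | hx <;> rw [hx] <;> omega
        rcases eq_or_lt_of_le (show a ≤ i - 1 by omega) with hai1 | hai1
        · -- a = i - 1 : contradicts p < e a
          exfalso
          rw [← hai1, chain_of_le (le_refl a)] at hdead
          omega
        · apply iff_of_false
          · intro hgood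
            have h1 := hgood (i - 1) (by omega) (by omega)
            rw [hlow p (i - 1) (by omega)] at h1
            omega
          · intro hgood
            have h1 := hgood (i - 1) (by omega) (by omega)
            omega
      · push_neg at hx
        have hxx : Equiv.swap j (j + 1) (chain w a i p) = chain w a i p :=
          Equiv.swap_apply_of_ne_of_ne hx.1 hx.2
        have hpt : ∀ k, chain (Function.update w (i + 1) (Equiv.swap j (j + 1) * w (i + 1))) a k p
            = chain w a k p := by
          intro k
          rcases le_or_gt k i with h | h
          · exact hlow p k h
          · rw [chain_updB_ge (show a ≤ i by omega) (by omega), hsinv]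
            simp only [Equiv.Perm.mul_apply]
            rw [hxx, ← chain_succ (show a ≤ i by omega)]
            exact (chain_chain (show a ≤ i + 1 by omega) (by omega)).symm
        simp only [hpt]
    · -- b ≤ i
      have hiff : ∀ k, a < k → k ≤ b →
          (chain (Function.update w (i + 1) (Equiv.swap j (j + 1) * w (i + 1))) a k p
            = chain w a k p) :=
        fun k hk1 hk2 => hlow p k (by omega)
      constructor
      · intro h k hk1 hk2
        have h1 := h k hk1 hk2
        rwa [hiff k hk1 hk2] at h1
      · intro h k hk1 hk2
        rw [hiff k hk1 hk2]
        exact h k hk1 hk2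

/-- Rank is unchanged under the full transformation. -/
lemma rank_transform_main (hi1 : 1 ≤ i) (hj : j + 1 < e i) (a b : ℕ) :
    rank e (Function.update (Function.update w i (w i * Equiv.swap j (j + 1))) (i + 1)
      (Equiv.swap j (j + 1) * w (i + 1))) a b = rank e w a b := by
  set W : ℕ → Equiv.Perm ℕ := Function.update (Function.update w i (w i * Equiv.swap j (j + 1)))
    (i + 1) (Equiv.swap j (j + 1) * w (i + 1)) with hW
  have hWi : W i = w i * Equiv.swap j (j + 1) := by
    rw [hW, Function.update_of_ne (by omega), Function.update_self]
  have hWi1 : W (i + 1) = Equiv.swap j (j + 1) * w (i + 1) := by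
    rw [hW, Function.update_self]
  have hWt : ∀ t, t ≠ i → t ≠ i + 1 → W t = w t := by
    intro t h1 h2
    rw [hW, Function.update_of_ne h2, Function.update_of_ne h1]
  rcases lt_or_ge a i with ha | ha
  · -- a < i : chains agree except twisted at column i
    have hlow : ∀ p k, k < i → chain W a k p = chain w a k p :=
      fun p k hk => chain_congr fun t ht1 ht2 => hWt t (by omega) (by omega)
    have hat : ∀ p, chain W a i p = Equiv.swap j (j + 1) (chain w a i p) := by
      intro p
      obtain ⟨i', hi'⟩ : ∃ i', i = i' + 1 := ⟨i - 1, by omega⟩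
      subst hi'
      rw [chain_succ (by omega), chain_succ (by omega), hlow p i' (by omega), hWi,
        mul_swap_inv]
      simp
    have hup : ∀ p k, i < k → chain W a k p = chain w a k p := by
      intro p k hk
      have hat1 : chain W a (i + 1) p = chain w a (i + 1) p := by
        rw [chain_succ (show a ≤ i by omega), chain_succ (show a ≤ i by omega), hat, hWi1,
          swap_mul_inv]
        simp
      rcases eq_or_lt_of_le (show i + 1 ≤ k by omega) with h | h
      · rw [← h]; exact hat1
      · rw [chain_chain (show a ≤ i + 1 by omega) (show i + 1 ≤ k by omega),
          chain_chain (w := w) (show a ≤ i + 1 by omega) (show i + 1 ≤ k by omega), hat1]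
        exact chain_congr fun t ht1 ht2 => hWt t (by omega) (by omega)
    rw [rank_eq_filter, rank_eq_filter]
    congr 1
    apply Finset.filter_congr
    intro p _
    constructor
    · intro h k hk1 hk2
      have h1 := h k hk1 hk2
      rcases lt_trichotomy k i with hki | hki | hki
      · rwa [hlow p k hki] at h1
      · rw [hki] at h1 ⊢
        rw [hat] at h1
        exact (swap_lt_iff hj).1 h1
      · rwa [hup p k hki] at h1
    · intro h k hk1 hk2
      have h1 := h k hk1 hk2
      rcases lt_trichotomy k i with hki | hki | hki
      · rwa [hlow p k hki]
      · rw [hki] at h1 ⊢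
        rw [hat]
        exact (swap_lt_iff hj).2 h1
      · rwa [hup p k hki]
  rcases eq_or_lt_of_le ha with hai | hai
  · -- a = i : relabel dots of column i
    have hae : a = i := hai.symm
    subst hae
    have hpt : ∀ p k, a < k → chain W a k p = chain w a k (Equiv.swap j (j + 1) p) := by
      intro p k hk
      have h1 : chain W a (a + 1) p = (w (a + 1))⁻¹ (Equiv.swap j (j + 1) p) := by
        rw [chain_succ (le_refl a), chain_of_le (le_refl a), hWi1, swap_mul_inv]
        simp
      have h2 : chain w a (a + 1) (Equiv.swap j (j + 1) p)
          = (w (a + 1))⁻¹ (Equiv.swap j (j + 1) p) := by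
        rw [chain_succ (le_refl a), chain_of_le (le_refl a)]
      rcases eq_or_lt_of_le (show a + 1 ≤ k by omega) with h | h
      · rw [← h, h1, h2]
      · rw [chain_chain (show a ≤ a + 1 by omega) (show a + 1 ≤ k by omega),
          chain_chain (w := w) (show a ≤ a + 1 by omega) (show a + 1 ≤ k by omega), h1, h2]
        exact chain_congr fun t ht1 ht2 => hWt t (by omega) (by omega)
    rw [rank_eq_filter, rank_eq_filter, rankFinset, rankFinset]
    have heq : (Finset.range (e a)).filter
          (fun p => ∀ k, a < k → k ≤ b → chain W a k p < e k) =
        (Finset.range (e a)).filter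
          (fun p => (fun q => ∀ k, a < k → k ≤ b → chain w a k q < e k)
            (Equiv.swap j (j + 1) p)) := by
      apply Finset.filter_congr
      intro p _
      constructor
      · intro h k hk1 hk2; rw [← hpt p k hk1]; exact h k hk1 hk2
      · intro h k hk1 hk2; rw [hpt p k hk1]; exact h k hk1 hk2
    rw [heq]
    exact filter_card_swap hj (fun q => ∀ k, a < k → k ≤ b → chain w a k q < e k)
  · -- a > i
    rw [rank_eq_filter, rank_eq_filter]
    congr 1
    apply Finset.filter_congr
    intro p _
    have hch : ∀ k, chain W a k p = chain w a k p :=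
      fun k => chain_congr fun t ht1 ht2 => hWt t (by omega) (by omega)
    simp only [hch]

end KMS
namespace KMS

attribute [local instance] Classical.propDecidable

variable {n : ℕ} {e : ℕ → ℕ} {w : ℕ → Equiv.Perm ℕ} {i j k : ℕ}

lemma sum_update_ell {s : Finset ℕ} (hk : k ∈ s) (f : ℕ → Equiv.Perm ℕ) (v : Equiv.Perm ℕ) :
    ∑ t ∈ s, ell (Function.update f k v t) = ell v + ∑ t ∈ s.erase k, ell (f t) := by
  have h1 : ∑ t ∈ s, ell (Function.update f k v t)
      = ∑ t ∈ s, Function.update (fun t => ell (f t)) k (ell v) t := by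
    apply Finset.sum_congr rfl
    intro t _
    by_cases h : t = k
    · subst h; rw [Function.update_self, Function.update_self]
    · rw [Function.update_of_ne h, Function.update_of_ne h]
  rw [h1, Finset.sum_update_of_mem hk, ← Finset.erase_eq]

lemma diagLength_update1 (hk1 : 1 ≤ k) (hk2 : k ≤ n) (u : Equiv.Perm ℕ) :
    diagLength n (Function.update w k u) + ell (w k) = diagLength n w + ell u := by
  have hmem : k ∈ Finset.Icc 1 n := Finset.mem_Icc.2 ⟨hk1, hk2⟩
  have h1 := sum_update_ell hmem w u
  have h2 : ∑ t ∈ Finset.Icc 1 n, ell (w t)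
      = ell (w k) + ∑ t ∈ (Finset.Icc 1 n).erase k, ell (w t) :=
    (Finset.add_sum_erase _ _ hmem).symm
  rw [diagLength, diagLength, h1, h2]
  omega

lemma diagLength_update2 (hi1 : 1 ≤ i) (hi2 : i + 1 ≤ n) (u1 u2 : Equiv.Perm ℕ) :
    diagLength n (Function.update (Function.update w i u1) (i + 1) u2)
        + ell (w i) + ell (w (i + 1))
      = diagLength n w + ell u1 + ell u2 := by
  have h1 := diagLength_update1 (n := n) (w := Function.update w i u1) (show 1 ≤ i + 1 by omega) hi2 u2
  have h2 := diagLength_update1 (n := n) (w := w) hi1 (by omega) u1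
  rw [Function.update_of_ne (by omega)] at h1
  omega

theorem transStep_preserves_minimal' (n : ℕ) (hn : 1 ≤ n) (e : ℕ → ℕ)
    (w : ℕ → Equiv.Perm ℕ) (hw : IsMinimal n e w) (i j : ℕ)
    (hi1 : 1 ≤ i) (hi2 : i + 1 ≤ n) (hj : j + 1 < e i)
    (hx : Xor' (w i (j + 1) < w i j) ((w (i + 1))⁻¹ (j + 1) < (w (i + 1))⁻¹ j))
    (w' : ℕ → Equiv.Perm ℕ)
    (hw' : w' = Function.update
      (Function.update w i (w i * Equiv.swap j (j + 1))) (i + 1)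
      (Equiv.swap j (j + 1) * w (i + 1))) :
    IsMinimal n e w' ∧ ∀ a b, a ≤ b → b ≤ n → rank e w' a b = rank e w a b := by
  obtain ⟨hlace, hmin⟩ := hw
  obtain ⟨hnorm, hcond⟩ := hlace
  obtain ⟨hfin_i, hdesc_i, hdesc_inv_i⟩ := hcond i hi1 (by omega)
  obtain ⟨hfin_i1, hdesc_i1, hdesc_inv_i1⟩ := hcond (i + 1) (by omega) hi2
  subst hw'
  set W := Function.update (Function.update w i (w i * Equiv.swap j (j + 1))) (i + 1)
    (Equiv.swap j (j + 1) * w (i + 1)) with hW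
  have hWi : W i = w i * Equiv.swap j (j + 1) := by
    rw [hW, Function.update_of_ne (by omega), Function.update_self]
  have hWi1 : W (i + 1) = Equiv.swap j (j + 1) * w (i + 1) := by
    rw [hW, Function.update_self]
  have hWt : ∀ t, t ≠ i → t ≠ i + 1 → W t = w t := by
    intro t h1 h2
    rw [hW, Function.update_of_ne h2, Function.update_of_ne h1]
  -- rank invariance of the full transformation
  have hrank : rank e W = rank e w :=
    funext fun a => funext fun b => rank_transform_main hi1 hj a b
  -- the two always-valid lace conditions
  have hlace_i_desc : ∀ t, W i (t + 1) < W i t → t < e i := by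
    intro t ht
    rw [hWi] at ht
    rcases descent_mul_swap ht with h | h
    · exact hdesc_i t h
    · omega
  have hlace_i1_inv : ∀ t, (W (i + 1))⁻¹ (t + 1) < (W (i + 1))⁻¹ t → t < e (i + 1 - 1) := by
    intro t ht
    rw [hWi1, swap_mul_inv] at ht
    simp only [Nat.add_sub_cancel]
    rcases descent_mul_swap ht with h | h
    · simpa using hdesc_inv_i1 t h
    · omega
  rcases hx with ⟨hA, hnB⟩ | ⟨hB, hnA⟩
  · -- Case A : w i has the descent at j
    have hBne : (w (i + 1))⁻¹ j ≠ (w (i + 1))⁻¹ (j + 1) := by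
      intro h
      have := (w (i + 1))⁻¹.injective h
      omega
    have hBlt : (w (i + 1))⁻¹ j < (w (i + 1))⁻¹ (j + 1) := by
      rcases lt_or_ge ((w (i + 1))⁻¹ j) ((w (i + 1))⁻¹ (j + 1)) with h | h
      · exact h
      · exact absurd (lt_of_le_of_ne h (Ne.symm hBne)) hnB
    -- the inverse of w i * s gets no new descent (since w i descends at j)
    have hlace_i_inv : ∀ t, (W i)⁻¹ (t + 1) < (W i)⁻¹ t → t < e (i - 1) := by
      intro t ht
      rw [hWi, mul_swap_inv] at ht
      rcases descent_swap_mul ht with h | h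
      · exact hdesc_inv_i t h
      · exfalso
        have h1 : w i j = t := by rw [← h.1]; simp
        have h2 : w i (j + 1) = t + 1 := by rw [← h.2]; simp
        omega
    by_cases hbadA : (w (i + 1))⁻¹ (j + 1) = (w (i + 1))⁻¹ j + 1 ∧ e (i + 1) ≤ (w (i + 1))⁻¹ j
    · -- bad subcase : contradiction with minimality
      exfalso
      set wA := Function.update w i (w i * Equiv.swap j (j + 1)) with hwA
      have hwAi : wA i = w i * Equiv.swap j (j + 1) := Function.update_self _ _ _
      have hwAt : ∀ t, t ≠ i → wA t = w t := fun t ht => Function.update_of_ne ht _ _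
      have hlaceA : IsLace n e wA := by
        constructor
        · intro t ht
          rw [hwAt t (by omega)]
          exact hnorm t ht
        · intro t ht1 htn
          by_cases hti : i = t
          · subst hti
            rw [hwAi]
            refine ⟨finSupp_mul_swap hfin_i j, ?_, ?_⟩
            · intro t ht
              rcases descent_mul_swap ht with h | h
              · exact hdesc_i t h
              · omega
            · intro t ht
              rw [mul_swap_inv] at ht
              rcases descent_swap_mul ht with h | h
              · exact hdesc_inv_i t h
              · exfalso
                have h1 : w i j = t := by rw [← h.1]; simp
                have h2 : w i (j + 1) = t + 1 := by rw [← h.2]; simp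
                omega
          · rw [hwAt t (fun h => hti h.symm)]
            exact hcond t ht1 htn
      have hrankA : rank e wA = rank e w :=
        funext fun a => funext fun b => rank_transform_A hi1 hj hbadA.2 hbadA.1 a b
      have hlenA : diagLength n wA + ell (w i) = diagLength n w + ell (w i * Equiv.swap j (j + 1)) :=
        diagLength_update1 hi1 (by omega) _
      have hell : ell (w i * Equiv.swap j (j + 1)) + 1 = ell (w i) := ell_descent hfin_i hA
      have hlow := lower_bound hlaceA
      rw [hrankA] at hlow
      omega
    · -- good subcase
      push_neg at hbadA
      have hlaceW : IsLace n e W := by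
        constructor
        · intro t ht
          rw [hWt t (by omega) (by omega)]
          exact hnorm t ht
        · intro t ht1 htn
          by_cases hti : i = t
          · subst hti
            exact ⟨by rw [hWi]; exact finSupp_mul_swap hfin_i j, hlace_i_desc, hlace_i_inv⟩
          by_cases hti1 : i + 1 = t
          · subst hti1
            refine ⟨by rw [hWi1]; exact finSupp_swap_mul hfin_i1 j, ?_, hlace_i1_inv⟩
            intro t ht
            rw [hWi1] at ht
            rcases descent_swap_mul ht with h | h
            · exact hdesc_i1 t h
            · have h1 : (w (i + 1))⁻¹ j = t := by rw [← h.1]; simp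
              have h2 : (w (i + 1))⁻¹ (j + 1) = t + 1 := by rw [← h.2]; simp
              have := hbadA (by omega)
              omega
          · rw [hWt t (fun h => hti h.symm) (fun h => hti1 h.symm)]
            exact hcond t ht1 htn
      have hlen : diagLength n W + ell (w i) + ell (w (i + 1))
          = diagLength n w + ell (w i * Equiv.swap j (j + 1))
            + ell (Equiv.swap j (j + 1) * w (i + 1)) :=
        diagLength_update2 hi1 hi2 _ _
      have hell1 : ell (w i * Equiv.swap j (j + 1)) + 1 = ell (w i) := ell_descent hfin_i hA
      have hell2 : ell (Equiv.swap j (j + 1) * w (i + 1)) = ell (w (i + 1)) + 1 :=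
        ell_swap_mul_ascent hfin_i1 hBlt
      refine ⟨⟨hlaceW, ?_⟩, fun a b _ _ => by rw [hrank]⟩
      rw [hrank]
      omega
  · -- Case B : (w (i+1))⁻¹ has the descent at j
    have hAne : w i j ≠ w i (j + 1) := by
      intro h
      have := (w i).injective h
      omega
    have hAlt : w i j < w i (j + 1) := by
      rcases lt_or_ge (w i j) (w i (j + 1)) with h | h
      · exact h
      · exact absurd (lt_of_le_of_ne h (Ne.symm hAne)) hnA
    have hlace_i1_desc : ∀ t, W (i + 1) (t + 1) < W (i + 1) t → t < e (i + 1) := by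
      intro t ht
      rw [hWi1] at ht
      rcases descent_swap_mul ht with h | h
      · exact hdesc_i1 t h
      · exfalso
        have h1 : (w (i + 1))⁻¹ j = t := by rw [← h.1]; simp
        have h2 : (w (i + 1))⁻¹ (j + 1) = t + 1 := by rw [← h.2]; simp
        omega
    by_cases hbadB : w i (j + 1) = w i j + 1 ∧ e (i - 1) ≤ w i j
    · -- bad subcase : contradiction with minimality
      exfalso
      set wB := Function.update w (i + 1) (Equiv.swap j (j + 1) * w (i + 1)) with hwB
      have hwBi : wB (i + 1) = Equiv.swap j (j + 1) * w (i + 1) := Function.update_self _ _ _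
      have hwBt : ∀ t, t ≠ i + 1 → wB t = w t := fun t ht => Function.update_of_ne ht _ _
      have hlaceB : IsLace n e wB := by
        constructor
        · intro t ht
          rw [hwBt t (by omega)]
          exact hnorm t ht
        · intro t ht1 htn
          by_cases hti : t = i + 1
          · subst hti
            rw [hwBi]
            refine ⟨finSupp_swap_mul hfin_i1 j, ?_, ?_⟩
            · intro t ht
              rcases descent_swap_mul ht with h | h
              · exact hdesc_i1 t h
              · exfalso
                have h1 : (w (i + 1))⁻¹ j = t := by rw [← h.1]; simp
                have h2 : (w (i + 1))⁻¹ (j + 1) = t + 1 := by rw [← h.2]; simp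
                omega
            · intro t ht
              rw [swap_mul_inv] at ht
              simp only [Nat.add_sub_cancel]
              rcases descent_mul_swap ht with h | h
              · simpa using hdesc_inv_i1 t h
              · omega
          · rw [hwBt t hti]
            exact hcond t ht1 htn
      have hrankB : rank e wB = rank e w :=
        funext fun a => funext fun b => rank_transform_B hi1 hj hbadB.2 hbadB.1 a b
      have hlenB : diagLength n wB + ell (w (i + 1))
          = diagLength n w + ell (Equiv.swap j (j + 1) * w (i + 1)) :=
        diagLength_update1 (by omega) hi2 _
      have hell : ell (Equiv.swap j (j + 1) * w (i + 1)) + 1 = ell (w (i + 1)) :=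
        ell_swap_mul_descent hfin_i1 hB
      have hlow := lower_bound hlaceB
      rw [hrankB] at hlow
      omega
    · -- good subcase
      push_neg at hbadB
      have hlaceW : IsLace n e W := by
        constructor
        · intro t ht
          rw [hWt t (by omega) (by omega)]
          exact hnorm t ht
        · intro t ht1 htn
          by_cases hti : i = t
          · subst hti
            refine ⟨by rw [hWi]; exact finSupp_mul_swap hfin_i j, hlace_i_desc, ?_⟩
            intro t ht
            rw [hWi, mul_swap_inv] at ht
            rcases descent_swap_mul ht with h | h
            · exact hdesc_inv_i t h
            · have h1 : w i j = t := by rw [← h.1]; simp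
              have h2 : w i (j + 1) = t + 1 := by rw [← h.2]; simp
              have := hbadB (by omega)
              omega
          by_cases hti1 : i + 1 = t
          · subst hti1
            exact ⟨by rw [hWi1]; exact finSupp_swap_mul hfin_i1 j, hlace_i1_desc, hlace_i1_inv⟩
          · rw [hWt t (fun h => hti h.symm) (fun h => hti1 h.symm)]
            exact hcond t ht1 htn
      have hlen : diagLength n W + ell (w i) + ell (w (i + 1))
          = diagLength n w + ell (w i * Equiv.swap j (j + 1))
            + ell (Equiv.swap j (j + 1) * w (i + 1)) :=
        diagLength_update2 hi1 hi2 _ _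
      have hell1 : ell (w i * Equiv.swap j (j + 1)) = ell (w i) + 1 := ell_ascent hfin_i hAlt
      have hell2 : ell (Equiv.swap j (j + 1) * w (i + 1)) + 1 = ell (w (i + 1)) :=
        ell_swap_mul_descent hfin_i1 hB
      refine ⟨⟨hlaceW, ?_⟩, fun a b _ _ => by rw [hrank]⟩
      rw [hrank]
      omega

end KMS

/-- applying an allowed transformation to a minimal lace diagram
with rank conditions `r` yields again a minimal lace diagram with rank
conditions `r`. -/
theorem transStep_preserves_minimal (n : ℕ) (hn : 1 ≤ n) (e : ℕ → ℕ)
    (w : ℕ → Equiv.Perm ℕ) (hw : IsMinimal n e w) (i j : ℕ)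
    (hi1 : 1 ≤ i) (hi2 : i + 1 ≤ n) (hj : j + 1 < e i)
    (hx : Xor' (w i (j + 1) < w i j) ((w (i + 1))⁻¹ (j + 1) < (w (i + 1))⁻¹ j))
    (w' : ℕ → Equiv.Perm ℕ)
    (hw' : w' = Function.update
      (Function.update w i (w i * Equiv.swap j (j + 1))) (i + 1)
      (Equiv.swap j (j + 1) * w (i + 1))) :
    IsMinimal n e w' ∧ ∀ a b, a ≤ b → b ≤ n → rank e w' a b = rank e w a b := by
  exact KMS.transStep_preserves_minimal' n hn e w hw i j hi1 hi2 hj hx w' hw'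
end

section
/- Let u, w be permutations in S_m and let b_1,...,b_m be independent variables. If w is not less than or equal to u in the Bruhat order on S_m, then the specialization S_w(b_{u(1)},...,b_{u(m)}; b_1,...,b_m) of the double Schubert polynomial is zero. -/
open MvPolynomial

/-! ### Auxiliary development for the proof -/

namespace SchubertAux

open Equiv Finset

/-- The adjacent transposition `(a, a+1)`. -/
abbrev sw (a : ℕ) : Equiv.Perm ℕ := Equiv.swap a (a + 1)

lemma sw_apply (a x : ℕ) : sw a x = if x = a then a + 1 else if x = a + 1 then a else x := by
  simp [sw, Equiv.swap_apply_def]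

lemma sw_sw (a x : ℕ) : sw a (sw a x) = x := Equiv.swap_apply_self _ _ _

/-- `w` fixes everything from `m` on. -/
def InS (m : ℕ) (w : Equiv.Perm ℕ) : Prop := ∀ t, m ≤ t → w t = t

lemma InS.inv {m : ℕ} {w : Equiv.Perm ℕ} (h : InS m w) : InS m w⁻¹ := by
  intro t ht
  conv_lhs => rw [← h t ht]
  rw [← Equiv.Perm.mul_apply, inv_mul_cancel, Equiv.Perm.one_apply]

lemma InS.mul {m : ℕ} {u v : Equiv.Perm ℕ} (hu : InS m u) (hv : InS m v) : InS m (u * v) := by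
  intro t ht
  rw [Equiv.Perm.mul_apply, hv t ht, hu t ht]

lemma InS.sw {m a : ℕ} (h : a + 2 ≤ m) : InS m (sw a) := by
  intro t ht
  rw [sw_apply]
  split_ifs <;> omega

lemma InS.lt {m : ℕ} {w : Equiv.Perm ℕ} (h : InS m w) {x : ℕ} (hx : x < m) : w x < m := by
  by_contra hc
  push_neg at hc
  have := h (w x) hc
  have := w.injective this
  omega

lemma InS.one (m : ℕ) : InS m (1 : Equiv.Perm ℕ) := fun t _ => rfl

lemma finSupp_of_InS {m : ℕ} {w : Equiv.Perm ℕ} (h : InS m w) : FinSupp w := by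
  apply (Set.finite_Iio m).subset
  intro x hx
  simp only [Set.mem_setOf_eq] at hx
  by_contra hc
  exact hx (h x (by simpa [Set.mem_Iio] using hc))

lemma finSupp_mul {u v : Equiv.Perm ℕ} (hu : FinSupp u) (hv : FinSupp v) : FinSupp (u * v) := by
  apply (hu.union hv).subset
  intro x hx
  simp only [Set.mem_setOf_eq, Set.mem_union] at hx ⊢
  by_contra hc
  push_neg at hc
  rw [Equiv.Perm.mul_apply, hc.2, hc.1] at hx
  exact hx rfl

lemma finSupp_sw (a : ℕ) : FinSupp (sw a) := finSupp_of_InS (InS.sw le_rfl)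

lemma finSupp_one : FinSupp (1 : Equiv.Perm ℕ) := finSupp_of_InS (InS.one 0)

lemma exists_InS {w : Equiv.Perm ℕ} (h : FinSupp w) : ∃ m, InS m w := by
  obtain ⟨M, hM⟩ := h.bddAbove
  refine ⟨M + 1, fun t ht => ?_⟩
  by_contra hc
  have : t ≤ M := hM hc
  omega

/-! ### Inversions and length -/

/-- The inversion set. -/
def invSet (w : Equiv.Perm ℕ) : Set (ℕ × ℕ) := {p | p.1 < p.2 ∧ w p.2 < w p.1}

lemma ell_def (w : Equiv.Perm ℕ) : ell w = (invSet w).ncard := rfl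

lemma invSet_subset {m : ℕ} {w : Equiv.Perm ℕ} (h : InS m w) :
    invSet w ⊆ Set.Iio m ×ˢ Set.Iio m := by
  rintro ⟨x, y⟩ ⟨hxy, hw⟩
  dsimp only at hxy hw
  simp only [Set.mem_prod, Set.mem_Iio]
  constructor
  · by_contra hc
    push_neg at hc
    have h1 := h x hc
    have h2 := h y (by omega)
    omega
  · by_contra hc
    push_neg at hc
    have h2 := h y hc
    -- w y = y, so w x > y ≥ m, so w x is fixed by w⁻¹, giving x = w x
    have h3 : m ≤ w x := by omega
    have h4 := h.inv (w x) h3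
    rw [← Equiv.Perm.mul_apply, inv_mul_cancel, Equiv.Perm.one_apply] at h4
    omega

lemma invSet_finite {w : Equiv.Perm ℕ} (h : FinSupp w) : (invSet w).Finite := by
  obtain ⟨m, hm⟩ := exists_InS h
  exact (((Set.finite_Iio m).prod (Set.finite_Iio m))).subset (invSet_subset hm)

lemma ell_le_sq {m : ℕ} {w : Equiv.Perm ℕ} (h : InS m w) : ell w ≤ m * m := by
  rw [ell_def]
  have h1 : invSet w ⊆ ↑(Finset.range m ×ˢ Finset.range m) := by
    intro p hp
    have := invSet_subset h hp
    simp only [Set.mem_prod, Set.mem_Iio] at this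
    simp [Finset.mem_product, this.1, this.2]
  calc (invSet w).ncard ≤ (↑(Finset.range m ×ˢ Finset.range m) : Set (ℕ × ℕ)).ncard :=
        Set.ncard_le_ncard h1 (Finset.finite_toSet _)
    _ = m * m := by rw [Set.ncard_coe_finset]; simp

lemma ell_one : ell 1 = 0 := by
  rw [ell_def]
  convert Set.ncard_empty (ℕ × ℕ)
  ext ⟨x, y⟩
  simp only [invSet, Set.mem_setOf_eq, Set.mem_empty_iff_false, iff_false, not_and,
    Equiv.Perm.one_apply]
  omega

lemma sw_lt {a x y : ℕ} (hxy : x < y) (hne : ¬(x = a ∧ y = a + 1)) : sw a x < sw a y := by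
  rw [sw_apply, sw_apply]
  split_ifs <;> omega

lemma ell_ascent {w : Equiv.Perm ℕ} (hf : FinSupp w) {a : ℕ} (h : w a < w (a + 1)) :
    ell (w * sw a) = ell w + 1 := by
  have hfin := invSet_finite hf
  have hkey : invSet (w * sw a) =
      insert (a, a + 1) ((fun p : ℕ × ℕ => (sw a p.1, sw a p.2)) '' invSet w) := by
    ext ⟨x, y⟩
    simp only [invSet, Set.mem_setOf_eq, Set.mem_insert_iff, Set.mem_image,
      Equiv.Perm.mul_apply, Prod.mk.injEq, Prod.exists]
    constructor
    · rintro ⟨hxy, hw⟩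
      by_cases hc : x = a ∧ y = a + 1
      · exact Or.inl ⟨hc.1, hc.2⟩
      · exact Or.inr ⟨sw a x, sw a y, ⟨sw_lt hxy hc, hw⟩, sw_sw a x, sw_sw a y⟩
    · rintro (⟨hx, hy⟩ | ⟨p, q, ⟨hpq, hw⟩, hp, hq⟩)
      · subst hx; subst hy
        refine ⟨lt_add_one x, ?_⟩
        rw [Equiv.swap_apply_left, Equiv.swap_apply_right]
        exact h
      · subst hp; subst hq
        have hne : ¬(p = a ∧ q = a + 1) := by
          rintro ⟨rfl, rfl⟩
          omega
        refine ⟨sw_lt hpq hne, ?_⟩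
        rwa [sw_sw, sw_sw]
  rw [ell_def, ell_def, hkey]
  have hinj : Function.Injective (fun p : ℕ × ℕ => (sw a p.1, sw a p.2)) := by
    intro p q hpq
    simp only [Prod.mk.injEq] at hpq
    have h1 := (sw a).injective hpq.1
    have h2 := (sw a).injective hpq.2
    exact Prod.ext h1 h2
  have hnm : (a, a + 1) ∉ (fun p : ℕ × ℕ => (sw a p.1, sw a p.2)) '' invSet w := by
    rintro ⟨⟨p, q⟩, ⟨hpq, _⟩, heq⟩
    simp only [Prod.mk.injEq] at heq
    dsimp only at hpq heq
    have h1 := congrArg (sw a) heq.1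
    have h2 := congrArg (sw a) heq.2
    rw [sw_sw, Equiv.swap_apply_left] at h1
    rw [sw_sw, Equiv.swap_apply_right] at h2
    omega
  rw [Set.ncard_insert_of_notMem hnm (hfin.image _), Set.ncard_image_of_injective _ hinj]

lemma ell_descent {w : Equiv.Perm ℕ} (hf : FinSupp w) {a : ℕ} (h : w (a + 1) < w a) :
    ell w = ell (w * sw a) + 1 := by
  have hf' : FinSupp (w * sw a) := finSupp_mul hf (finSupp_sw a)
  have h' : (w * sw a) a < (w * sw a) (a + 1) := by
    simp only [Equiv.Perm.mul_apply, sw, Equiv.swap_apply_left, Equiv.swap_apply_right]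
    exact h
  have := ell_ascent hf' h'
  rwa [mul_assoc, Equiv.swap_mul_self, mul_one] at this

/-! ### Words -/

lemma wordProd_nil : wordProd [] = 1 := rfl

lemma wordProd_concat (l : List ℕ) (a : ℕ) : wordProd (l ++ [a]) = wordProd l * sw a := by
  simp [wordProd]

lemma finSupp_wordProd (l : List ℕ) : FinSupp (wordProd l) := by
  induction l with
  | nil => exact finSupp_one
  | cons a l ih =>
      have : wordProd (a :: l) = sw a * wordProd l := by simp [wordProd]
      rw [this]
      exact finSupp_mul (finSupp_sw a) ih

lemma ell_wordProd_le (l : List ℕ) : ell (wordProd l) ≤ l.length := by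
  induction l using List.reverseRecOn with
  | nil => simp [wordProd_nil, ell_one]
  | append_singleton m a ih =>
      rw [wordProd_concat]
      rcases lt_trichotomy (wordProd m a) (wordProd m (a + 1)) with hlt | heq | hgt
      · rw [ell_ascent (finSupp_wordProd m) hlt]
        simp only [List.length_append, List.length_singleton]
        omega
      · exact absurd ((wordProd m).injective heq) (by omega)
      · have := ell_descent (finSupp_wordProd m) hgt
        simp only [List.length_append, List.length_singleton]
        omega

/-! ### Rank matrices -/

/-- `rk v p q` = number of positions `i < p` with `v i ≥ q`. -/
def rk (v : Equiv.Perm ℕ) (p q : ℕ) : ℕ := ((Finset.range p).filter fun i => q ≤ v i).card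

lemma rk_succ (v : Equiv.Perm ℕ) (p q : ℕ) :
    rk v (p + 1) q = rk v p q + (if q ≤ v p then 1 else 0) := by
  rw [rk, rk, Finset.range_add_one, Finset.filter_insert]
  split_ifs with h
  · rw [Finset.card_insert_of_notMem (by simp)]
  · rw [add_zero]

lemma rk_mul_sw_of_ne {a p : ℕ} (v : Equiv.Perm ℕ) (q : ℕ) (h : p ≠ a + 1) :
    rk (v * sw a) p q = rk v p q := by
  rcases le_or_gt p a with hpa | hpa
  · unfold rk
    congr 1
    apply Finset.filter_congr
    intro i hi
    simp only [Finset.mem_range] at hi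
    have : sw a i = i := by rw [sw_apply]; split_ifs <;> omega
    simp [Equiv.Perm.mul_apply, this]
  · have hpa2 : a + 2 ≤ p := by omega
    unfold rk
    apply Finset.card_nbij' (i := fun i => sw a i) (j := fun i => sw a i)
    · intro x hx
      replace hx := Finset.mem_coe.1 hx
      refine Finset.mem_coe.2 ?_
      rw [Finset.mem_filter] at hx ⊢
      simp only [Finset.mem_filter, Finset.mem_range, Equiv.Perm.mul_apply] at hx ⊢
      obtain ⟨hx1, hx2⟩ := hx
      refine ⟨?_, hx2⟩
      have hs := sw_apply a x
      split_ifs at hs <;> omega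
    · intro x hx
      replace hx := Finset.mem_coe.1 hx
      refine Finset.mem_coe.2 ?_
      rw [Finset.mem_filter] at hx ⊢
      simp only [Finset.mem_filter, Finset.mem_range, Equiv.Perm.mul_apply] at hx ⊢
      obtain ⟨hx1, hx2⟩ := hx
      refine ⟨?_, by rwa [sw_sw]⟩
      have hs := sw_apply a x
      split_ifs at hs <;> omega
    · intro x _; exact sw_sw a x
    · intro x _; exact sw_sw a x

lemma rk_mul_sw_succ (v : Equiv.Perm ℕ) (a q : ℕ) :
    rk (v * sw a) (a + 1) q = rk v a q + (if q ≤ v (a + 1) then 1 else 0) := by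
  rw [rk_succ, rk_mul_sw_of_ne v q (by omega)]
  congr 2
  simp [Equiv.Perm.mul_apply, sw, Equiv.swap_apply_left]

/-- Rank-matrix comparison (Ehresmann criterion for Bruhat order). -/
def RLE (w u : Equiv.Perm ℕ) : Prop := ∀ p q, rk w p q ≤ rk u p q

lemma rle_refl (w : Equiv.Perm ℕ) : RLE w w := fun _ _ => le_rfl

lemma rle_trans {w v u : Equiv.Perm ℕ} (h1 : RLE w v) (h2 : RLE v u) : RLE w u :=
  fun p q => (h1 p q).trans (h2 p q)

lemma rle_mul_sw_right {w : Equiv.Perm ℕ} {a : ℕ} (h : w a < w (a + 1)) :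
    RLE w (w * sw a) := by
  intro p q
  by_cases hp : p = a + 1
  · subst hp
    rw [rk_succ, rk_mul_sw_succ]
    have : (if q ≤ w a then 1 else 0) ≤ (if q ≤ w (a + 1) then (1:ℕ) else 0) := by
      split_ifs <;> omega
    omega
  · rw [rk_mul_sw_of_ne w q hp]

/-- Key cancellation: if `w` has an ascent at `a` then `RLE (w s_a) (u s_a)` implies
`RLE w u`. -/
lemma rle_cancel {w u : Equiv.Perm ℕ} {a : ℕ} (hw : w a < w (a + 1))
    (h : RLE (w * sw a) (u * sw a)) : RLE w u := by
  intro p q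
  by_cases hp : p = a + 1
  · subst hp
    have hB : rk w a q ≤ rk u a q := by
      have := h a q
      rwa [rk_mul_sw_of_ne w q (by omega), rk_mul_sw_of_ne u q (by omega)] at this
    rw [rk_succ, rk_succ]
    by_cases h1 : q ≤ w a
    · by_cases h2 : q ≤ u a
      · simp only [if_pos h1, if_pos h2]; omega
      · -- use position a+2
        have h3 := h (a + 2) q
        rw [rk_mul_sw_of_ne w q (by omega), rk_mul_sw_of_ne u q (by omega),
          show a + 2 = (a+1)+1 by rfl, rk_succ, rk_succ, rk_succ, rk_succ] at h3
        have hw1 : q ≤ w (a + 1) := by omega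
        simp only [if_pos h1, if_pos hw1, if_neg h2] at h3
        simp only [if_pos h1, if_neg h2]
        split_ifs at h3 <;> omega
    · simp only [if_neg h1]
      split_ifs <;> omega
  · rw [← rk_mul_sw_of_ne w q hp, ← rk_mul_sw_of_ne u q hp]
    exact h p q

/-- Key step: appending a common ascent letter preserves rank comparison. -/
lemma rle_step {w v : Equiv.Perm ℕ} {a : ℕ} (hv : v a < v (a + 1)) (h : RLE w v) :
    RLE (w * sw a) (v * sw a) := by
  intro p q
  by_cases hp : p = a + 1
  · subst hp
    rw [rk_mul_sw_succ, rk_mul_sw_succ]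
    have hB := h a q
    by_cases h1 : q ≤ w (a + 1)
    · by_cases h2 : q ≤ v (a + 1)
      · simp only [if_pos h1, if_pos h2]; omega
      · have h3 := h (a + 2) q
        rw [show a + 2 = (a+1)+1 by rfl, rk_succ, rk_succ, rk_succ, rk_succ] at h3
        have hv1 : ¬ q ≤ v a := by omega
        simp only [if_pos h1, if_neg h2, if_neg hv1] at h3
        simp only [if_pos h1, if_neg h2]
        split_ifs at h3 <;> omega
    · simp only [if_neg h1]
      split_ifs <;> omega
  · rw [rk_mul_sw_of_ne w q hp, rk_mul_sw_of_ne v q hp]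
    exact h p q

/-! ### Bruhat order vs rank matrices -/

lemma image_range {m : ℕ} {w : Equiv.Perm ℕ} (h : InS m w) :
    (Finset.range m).image w = Finset.range m := by
  apply Finset.eq_of_subset_of_card_le
  · intro x hx
    simp only [Finset.mem_image, Finset.mem_range] at hx ⊢
    obtain ⟨i, hi, rfl⟩ := hx
    exact h.lt hi
  · rw [Finset.card_image_of_injective _ w.injective]

lemma sum_range_perm {m : ℕ} {w : Equiv.Perm ℕ} (h : InS m w) :
    ∑ i ∈ Finset.range m, w i = ∑ i ∈ Finset.range m, i := by
  conv_rhs => rw [← image_range h]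
  rw [Finset.sum_image (fun x _ y _ hxy => w.injective hxy)]

lemma eq_one_of_no_descent {w : Equiv.Perm ℕ} (hf : FinSupp w)
    (h : ∀ a, ¬ w (a + 1) < w a) : w = 1 := by
  have hm : StrictMono w := by
    apply strictMono_nat_of_lt_succ
    intro n
    exact lt_of_le_of_ne (not_lt.mp (h n)) (w.injective.ne (by omega))
  obtain ⟨M, hM⟩ := exists_InS hf
  have hkey := (Finset.sum_eq_sum_iff_of_le
    (f := fun i => i) (g := fun i => w i) (s := Finset.range M)
    (fun i _ => hm.le_apply)).mp (sum_range_perm hM).symm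
  ext x
  rcases lt_or_ge x M with hx | hx
  · exact (hkey x (Finset.mem_range.mpr hx)).symm
  · exact hM x hx

lemma exists_descent {w : Equiv.Perm ℕ} (hf : FinSupp w) (hne : w ≠ 1) :
    ∃ a, w (a + 1) < w a := by
  by_contra hc
  push_neg at hc
  exact hne (eq_one_of_no_descent hf (fun a => not_lt.mpr (hc a)))

lemma ell_eq_zero {w : Equiv.Perm ℕ} (hf : FinSupp w) (h0 : ell w = 0) : w = 1 := by
  apply eq_one_of_no_descent hf
  intro a hd
  have := ell_descent hf hd
  omega

lemma rle_one {w : Equiv.Perm ℕ} (h : RLE w 1) : w = 1 := by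
  by_contra hne
  have hx : ∃ x, w x ≠ x := by
    by_contra hc
    push_neg at hc
    exact hne (Equiv.ext hc)
  set x0 := Nat.find hx with hx0
  have hne0 : w x0 ≠ x0 := Nat.find_spec hx
  have hmin : ∀ y, y < x0 → w y = y := by
    intro y hy
    by_contra hc
    exact Nat.find_min hx hy hc
  have hgt : x0 < w x0 := by
    rcases lt_trichotomy (w x0) x0 with h1 | h1 | h1
    · have := hmin (w x0) h1
      have := w.injective this
      omega
    · omega
    · exact h1
  have h1 : 1 ≤ rk w (x0 + 1) (x0 + 1) := by
    have hx0m : x0 ∈ (Finset.range (x0 + 1)).filter (fun i => x0 + 1 ≤ w i) := by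
      simp only [Finset.mem_filter, Finset.mem_range]
      omega
    exact Finset.card_pos.mpr ⟨x0, hx0m⟩
  have h2 : rk 1 (x0 + 1) (x0 + 1) = 0 := by
    rw [rk, Finset.card_eq_zero]
    apply Finset.filter_false_of_mem
    intro i hi
    simp only [Finset.mem_range] at hi
    simp only [Equiv.Perm.one_apply]
    omega
  have := h (x0 + 1) (x0 + 1)
  omega

lemma concat_reduced {l : List ℕ} {a : ℕ}
    (h : (l ++ [a]).length = ell (wordProd (l ++ [a]))) :
    wordProd l a < wordProd l (a + 1) ∧ l.length = ell (wordProd l) := by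
  rw [wordProd_concat] at h
  simp only [List.length_append, List.length_singleton] at h
  have hle := ell_wordProd_le l
  have hf := finSupp_wordProd l
  rcases lt_trichotomy (wordProd l a) (wordProd l (a + 1)) with hasc | heq | hdesc
  · have := ell_ascent hf hasc
    exact ⟨hasc, by omega⟩
  · exact absurd ((wordProd l).injective heq) (by omega)
  · have := ell_descent hf hdesc
    omega

lemma subword_rle : ∀ l : List ℕ, l.length = ell (wordProd l) →
    ∀ l' : List ℕ, l'.Sublist l → l'.length = ell (wordProd l') →
    RLE (wordProd l') (wordProd l) := by
  intro l
  induction l using List.reverseRecOn with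
  | nil =>
    intro _ l' hs _
    rw [List.sublist_nil.mp hs]
    exact rle_refl _
  | append_singleton m a ih =>
    intro hred l' hs hred'
    obtain ⟨hasc, hmred⟩ := concat_reduced hred
    have hs2 : l'.reverse.Sublist (a :: m.reverse) := by simpa using hs.reverse
    rw [wordProd_concat]
    rcases List.sublist_cons_iff.mp hs2 with h1 | ⟨r, hr, hrs⟩
    · have hs3 : l'.Sublist m := by simpa using h1.reverse
      exact rle_trans (ih hmred l' hs3 hred') (rle_mul_sw_right hasc)
    · have hl' : l' = r.reverse ++ [a] := by
        rw [← l'.reverse_reverse, hr]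
        simp
      have hns : r.reverse.Sublist m := by simpa using hrs.reverse
      rw [hl'] at hred' ⊢
      obtain ⟨hasc', hnred⟩ := concat_reduced hred'
      rw [wordProd_concat]
      exact rle_step hasc (ih hmred r.reverse hns hnred)

lemma bruhat_rle {w u : Equiv.Perm ℕ} (h : BruhatLE w u) : RLE w u := by
  obtain ⟨l, l', ⟨hlu, hlul⟩, ⟨hlw, hlwl⟩, hs⟩ := h
  subst hlu
  subst hlw
  exact subword_rle l hlul l' hs hlwl

lemma rle_bruhat : ∀ k : ℕ, ∀ w u : Equiv.Perm ℕ, FinSupp w → FinSupp u →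
    ell u ≤ k → RLE w u → BruhatLE w u := by
  intro k
  induction k with
  | zero =>
    intro w u hfw hfu hk hr
    have hu1 : u = 1 := ell_eq_zero hfu (by omega)
    subst hu1
    have hw1 : w = 1 := rle_one hr
    subst hw1
    exact ⟨[], [], ⟨rfl, by simp [ell_one]⟩, ⟨rfl, by simp [ell_one]⟩, List.Sublist.refl _⟩
  | succ k ih =>
    intro w u hfw hfu hk hr
    by_cases hu1 : u = 1
    · subst hu1
      have hw1 : w = 1 := rle_one hr
      subst hw1
      exact ⟨[], [], ⟨rfl, by simp [ell_one]⟩, ⟨rfl, by simp [ell_one]⟩, List.Sublist.refl _⟩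
    · obtain ⟨a, hd⟩ := exists_descent hfu hu1
      have hdu := ell_descent hfu hd
      have hfu' : FinSupp (u * sw a) := finSupp_mul hfu (finSupp_sw a)
      have hu'k : ell (u * sw a) ≤ k := by omega
      have hwne : w a ≠ w (a + 1) := w.injective.ne (by omega)
      rcases hwne.lt_or_gt with hwa | hwa
      · -- `w` has an ascent at `a`
        have hr' : RLE w (u * sw a) := by
          intro p q
          by_cases hp : p = a + 1
          · subst hp
            rw [rk_mul_sw_succ, rk_succ]
            have hB := hr a q
            by_cases h1 : q ≤ w a
            · by_cases h2 : q ≤ u (a + 1)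
              · simp only [if_pos h1, if_pos h2]; omega
              · have h3 := hr (a + 2) q
                rw [show a + 2 = (a + 1) + 1 from rfl, rk_succ, rk_succ, rk_succ,
                  rk_succ] at h3
                have hw1 : q ≤ w (a + 1) := by omega
                simp only [if_pos h1, if_pos hw1, if_neg h2] at h3
                simp only [if_pos h1, if_neg h2]
                split_ifs at h3 <;> omega
            · simp only [if_neg h1]
              split_ifs <;> omega
          · rw [rk_mul_sw_of_ne u q hp]
            exact hr p q
        obtain ⟨l, l', hl, hl', hs⟩ := ih w (u * sw a) hfw hfu' hu'k hr'
        refine ⟨l ++ [a], l', ⟨?_, ?_⟩, hl', hs.trans (List.sublist_append_left l [a])⟩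
        · rw [wordProd_concat, hl.1, mul_assoc, Equiv.swap_mul_self, mul_one]
        · simp only [List.length_append, List.length_singleton, hl.2]
          omega
      · -- `w` has a descent at `a`
        have hdw := ell_descent hfw hwa
        have hfw' : FinSupp (w * sw a) := finSupp_mul hfw (finSupp_sw a)
        have hr' : RLE (w * sw a) (u * sw a) := by
          intro p q
          by_cases hp : p = a + 1
          · subst hp
            rw [rk_mul_sw_succ, rk_mul_sw_succ]
            have hB := hr a q
            by_cases h1 : q ≤ w (a + 1)
            · by_cases h2 : q ≤ u (a + 1)
              · simp only [if_pos h1, if_pos h2]; omega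
              · have h3 := hr (a + 2) q
                rw [show a + 2 = (a + 1) + 1 from rfl, rk_succ, rk_succ, rk_succ,
                  rk_succ] at h3
                have hw1 : q ≤ w a := by omega
                simp only [if_pos h1, if_pos hw1, if_neg h2] at h3
                simp only [if_pos h1, if_neg h2]
                split_ifs at h3 <;> omega
            · simp only [if_neg h1]
              split_ifs <;> omega
          · rw [rk_mul_sw_of_ne w q hp, rk_mul_sw_of_ne u q hp]
            exact hr p q
        obtain ⟨l, l', hl, hl', hs⟩ := ih (w * sw a) (u * sw a) hfw' hfu' hu'k hr'
        refine ⟨l ++ [a], l' ++ [a], ⟨?_, ?_⟩, ⟨?_, ?_⟩,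
          hs.append (List.Sublist.refl [a])⟩
        · rw [wordProd_concat, hl.1, mul_assoc, Equiv.swap_mul_self, mul_one]
        · simp only [List.length_append, List.length_singleton, hl.2]
          omega
        · rw [wordProd_concat, hl'.1, mul_assoc, Equiv.swap_mul_self, mul_one]
        · simp only [List.length_append, List.length_singleton, hl'.2]
          omega

lemma bruhat_refl {w : Equiv.Perm ℕ} (hf : FinSupp w) : BruhatLE w w :=
  rle_bruhat (ell w) w w hf hf le_rfl (rle_refl w)

/-! ### Bruhat lemmas needed for the main induction -/

lemma not_bruhat_asc {w u : Equiv.Perm ℕ} {i : ℕ} (hfw : FinSupp w) (hfu : FinSupp u)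
    (hasc : w i < w (i + 1)) (h : ¬BruhatLE w u) : ¬BruhatLE (w * sw i) u :=
  fun hb => h (rle_bruhat (ell u) w u hfw hfu le_rfl
    (rle_trans (rle_mul_sw_right hasc) (bruhat_rle hb)))

lemma not_bruhat_both {w u : Equiv.Perm ℕ} {i : ℕ} (hfw : FinSupp w) (hfu : FinSupp u)
    (hasc : w i < w (i + 1)) (h : ¬BruhatLE w u) : ¬BruhatLE (w * sw i) (u * sw i) :=
  fun hb => h (rle_bruhat (ell u) w u hfw hfu le_rfl (rle_cancel hasc (bruhat_rle hb)))

/-! ### The longest element -/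

lemma longest_apply (m x : ℕ) : longest m x = if x < m then m - 1 - x else x := rfl

lemma InS_longest (m : ℕ) : InS m (longest m) := by
  intro t ht
  rw [longest_apply, if_neg (by omega)]

lemma exists_ascent_lt {m : ℕ} {w : Equiv.Perm ℕ} (hw : InS m w) (hne : w ≠ longest m) :
    ∃ i, i + 1 < m ∧ w i < w (i + 1) := by
  by_contra hc
  push_neg at hc
  have hdesc : ∀ i, i + 1 < m → w (i + 1) < w i := fun i hi =>
    lt_of_le_of_ne (hc i hi) (w.injective.ne (by omega))
  have h1 : ∀ j, j < m → w j + j ≤ m - 1 := by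
    intro j
    induction j with
    | zero =>
      intro h0
      have := hw.lt h0
      omega
    | succ n ihn =>
      intro hn
      have h2 := ihn (by omega)
      have h3 := hdesc n hn
      omega
  have hsum := sum_range_perm hw
  have hrefl := Finset.sum_range_reflect (fun i => i) m
  have hkey := (Finset.sum_eq_sum_iff_of_le (f := fun i => w i) (g := fun i => m - 1 - i)
    (s := Finset.range m)
    (fun i hi => by
      have := h1 i (Finset.mem_range.mp hi)
      show w i ≤ m - 1 - i
      omega)).mp
    (by rw [hsum]; exact hrefl.symm)
  apply hne
  ext x
  rcases lt_or_ge x m with hx | hx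
  · rw [longest_apply, if_pos hx]
    exact hkey x (Finset.mem_range.mpr hx)
  · rw [longest_apply, if_neg (by omega)]
    exact hw x hx

lemma exists_low {m : ℕ} {u : Equiv.Perm ℕ} (hu : InS m u) (hne : u ≠ longest m) :
    ∃ i, i < m ∧ i + u i + 2 ≤ m := by
  by_contra hc
  push_neg at hc
  have hsum := sum_range_perm hu
  have hrefl := Finset.sum_range_reflect (fun i => i) m
  have hkey := (Finset.sum_eq_sum_iff_of_le (f := fun i => m - 1 - i) (g := fun i => u i)
    (s := Finset.range m)
    (fun i hi => by
      have h2 := hc i (Finset.mem_range.mp hi)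
      have h3 := hu.lt (Finset.mem_range.mp hi)
      show m - 1 - i ≤ u i
      omega)).mp
    (by rw [hsum]; exact hrefl)
  apply hne
  ext x
  rcases lt_or_ge x m with hx | hx
  · rw [longest_apply, if_pos hx]
    exact (hkey x (Finset.mem_range.mpr hx)).symm
  · rw [longest_apply, if_neg (by omega)]
    exact hu x hx

/-! ### Algebra -/

/-- The specialization `x_a ↦ b_{u a}`, `y_b ↦ b_b`. -/
noncomputable def phi (u : Equiv.Perm ℕ) : MvPolynomial (ℕ ⊕ ℕ) ℤ →ₐ[ℤ] MvPolynomial ℕ ℤ :=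
  MvPolynomial.aeval (Sum.elim (fun a => (MvPolynomial.X (u a) : MvPolynomial ℕ ℤ))
    (fun b => MvPolynomial.X b))

open MvPolynomial in
lemma phi_sX (u : Equiv.Perm ℕ) (i : ℕ) (f : MvPolynomial (ℕ ⊕ ℕ) ℤ) :
    phi u (sX i f) = phi (u * sw i) f := by
  have hfun : (Sum.elim (fun a => (X (u a) : MvPolynomial ℕ ℤ)) (fun b => X b)) ∘
      (Sum.map (Equiv.swap i (i + 1)) id) =
      Sum.elim (fun a => (X ((u * sw i) a) : MvPolynomial ℕ ℤ)) (fun b => X b) := by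
    funext v
    cases v with
    | inl a => simp [Equiv.Perm.mul_apply]
    | inr b => simp
  rw [phi, phi, sX, aeval_rename, hfun]

open MvPolynomial in
lemma X_sub_X_ne {a b : ℕ} (h : a ≠ b) : (X a - X b : MvPolynomial ℕ ℤ) ≠ 0 := by
  intro h0
  have h1 := congrArg (coeff (Finsupp.single a 1)) h0
  rw [coeff_sub, coeff_zero, coeff_X', coeff_X', if_pos rfl, if_neg] at h1
  · norm_num at h1
  · intro hh
    rcases (Finsupp.single_eq_single_iff _ _ _ _).mp hh with ⟨h2, _⟩ | ⟨h2, _⟩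
    · exact h h2.symm
    · exact one_ne_zero h2

open MvPolynomial in
lemma phi_longest_eq_zero {S : Equiv.Perm ℕ → MvPolynomial (ℕ ⊕ ℕ) ℤ}
    (hS : IsSchubertFamily S) {m : ℕ} {u : Equiv.Perm ℕ} (hu : InS m u)
    (hne : u ≠ longest m) : phi u (S (longest m)) = 0 := by
  obtain ⟨i, him, hlow⟩ := exists_low hu hne
  rw [hS.1 m, map_prod]
  apply Finset.prod_eq_zero (Finset.mem_range.mpr him)
  rw [map_prod]
  apply Finset.prod_eq_zero (Finset.mem_range.mpr (hu.lt him))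
  rw [if_pos (by omega : i + u i + 2 ≤ m), map_sub]
  rw [phi, aeval_X, aeval_X]
  simp

end SchubertAux

/-- if `w` is not less than or equal to `u` in the Bruhat order on
`S m`, then the specialization `𝔖_w(b_{u 1}, …, b_{u m}; b_1, …, b_m)` of the
double Schubert polynomial vanishes. -/
theorem schubert_specialization_eq_zero
    (S : Equiv.Perm ℕ → MvPolynomial (ℕ ⊕ ℕ) ℤ) (hS : IsSchubertFamily S)
    (m : ℕ) (u w : Equiv.Perm ℕ)
    (hu : ∀ t, m ≤ t → u t = t) (hw : ∀ t, m ≤ t → w t = t)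
    (h : ¬BruhatLE w u) :
    aeval (Sum.elim (fun a => (X (u a) : MvPolynomial ℕ ℤ)) (fun b => X b)) (S w)
      = 0 := by
  classical
  open SchubertAux in
  have main : ∀ k : ℕ, ∀ w u : Equiv.Perm ℕ, InS m w → InS m u →
      m * m ≤ ell w + k → ¬BruhatLE w u → phi u (S w) = 0 := by
    intro k
    induction k with
    | zero =>
      intro w u hw hu hk hb
      by_cases hL : w = longest m
      · subst hL
        apply phi_longest_eq_zero hS hu
        rintro rfl
        exact hb (bruhat_refl (finSupp_of_InS hw))
      · exfalso
        obtain ⟨i, him, hasc⟩ := exists_ascent_lt hw hL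
        have hw' : InS m (w * sw i) := hw.mul (InS.sw (by omega))
        have hellw' : ell (w * sw i) = ell w + 1 := ell_ascent (finSupp_of_InS hw) hasc
        have hle := ell_le_sq hw'
        omega
    | succ k ih =>
      intro w u hw hu hk hb
      by_cases hL : w = longest m
      · subst hL
        apply phi_longest_eq_zero hS hu
        rintro rfl
        exact hb (bruhat_refl (finSupp_of_InS hw))
      · obtain ⟨i, him, hasc⟩ := exists_ascent_lt hw hL
        have hswIn : InS m (sw i) := InS.sw (by omega)
        have hw' : InS m (w * sw i) := hw.mul hswIn
        have hu' : InS m (u * sw i) := hu.mul hswIn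
        have hfw : FinSupp w := finSupp_of_InS hw
        have hfu : FinSupp u := finSupp_of_InS hu
        have hfw' : FinSupp (w * sw i) := finSupp_mul hfw (finSupp_sw i)
        have hellw' : ell (w * sw i) = ell w + 1 := ell_ascent hfw hasc
        have h1 : phi u (S (w * sw i)) = 0 :=
          ih (w * sw i) u hw' hu (by omega) (not_bruhat_asc hfw hfu hasc hb)
        have h2 : phi (u * sw i) (S (w * sw i)) = 0 :=
          ih (w * sw i) (u * sw i) hw' hu' (by omega) (not_bruhat_both hfw hfu hasc hb)
        have hdesc : (w * sw i) (i + 1) < (w * sw i) i := by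
          simp only [Equiv.Perm.mul_apply, sw, Equiv.swap_apply_left, Equiv.swap_apply_right]
          exact hasc
        have hrec := (hS.2.1 (w * sw i) hfw' i).1 hdesc
        have hws : w * sw i * Equiv.swap i (i + 1) = w := by
          rw [mul_assoc, Equiv.swap_mul_self, mul_one]
        rw [hws] at hrec
        have h5 : phi u ((X (Sum.inl i) - X (Sum.inl (i + 1))) * S w) =
            phi u (S (w * sw i) - sX i (S (w * sw i))) := by rw [hrec]
        rw [map_mul, map_sub, map_sub, phi_sX, h1, h2, sub_zero] at h5
        have h6 : phi u (X (Sum.inl i)) = X (u i) := by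
          rw [phi, aeval_X]
          rfl
        have h7 : phi u (X (Sum.inl (i + 1))) = X (u (i + 1)) := by
          rw [phi, aeval_X]
          rfl
        rw [h6, h7] at h5
        rcases mul_eq_zero.mp h5 with hc | hc
        · exact absurd hc (X_sub_X_ne (u.injective.ne (by omega)))
        · exact hc
  have hfin := main (m * m) w u hw hu (by omega) h
  simpa [SchubertAux.phi] using hfin
end

section
/- Let u be a permutation in S_m and let b_1,...,b_m be independent variables. Then S_u(b_{u(1)},...,b_{u(m)}; b_1,...,b_m) = product over all pairs i < j with u(i) > u(j) of (b_{u(i)} - b_{u(j)}). -/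
open MvPolynomial

namespace SchubAux


/-- membership of a permutation in `S m`. -/
def InS (m : ℕ) (w : Equiv.Perm ℕ) : Prop := ∀ t, m ≤ t → w t = t

lemma InS.finSupp {m : ℕ} {w : Equiv.Perm ℕ} (hw : InS m w) : FinSupp w := by
  apply (Set.finite_Iio m).subset
  intro x hx
  by_contra h
  exact hx (hw x (le_of_not_gt h))

lemma InS.maps_lt {m : ℕ} {w : Equiv.Perm ℕ} (hw : InS m w) {i : ℕ} (hi : i < m) : w i < m := by
  by_contra h
  push_neg at h
  have h1 : w (w i) = w i := hw _ h
  have := w.injective h1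
  omega

lemma InS.mul_swap {m : ℕ} {w : Equiv.Perm ℕ} (hw : InS m w) {i : ℕ} (him : i + 1 < m) :
    InS m (w * Equiv.swap i (i+1)) := by
  intro t ht
  rw [Equiv.Perm.mul_apply, Equiv.swap_apply_of_ne_of_ne (by omega) (by omega)]
  exact hw t ht

lemma swap_lt_swap {i a b : ℕ} (hab : a < b) (hne : ¬(a = i ∧ b = i + 1)) :
    Equiv.swap i (i+1) a < Equiv.swap i (i+1) b := by
  rw [Equiv.swap_apply_def, Equiv.swap_apply_def]
  split_ifs <;> omega

lemma swap_lt_iff {i a j : ℕ} (ha : i + 2 ≤ a) : Equiv.swap i (i+1) j < a ↔ j < a := by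
  rw [Equiv.swap_apply_def]
  split_ifs <;> omega

lemma swap_lt_of_lt {i m j : ℕ} (him : i + 1 < m) (hj : j < m) : Equiv.swap i (i+1) j < m := by
  rw [Equiv.swap_apply_def]; split_ifs <;> omega

/-! ### rank counts and dominance order -/

/-- `rk w a k` = number of `j < a` with `w j ≥ k`. -/
def rk (w : Equiv.Perm ℕ) (a k : ℕ) : ℕ := ((Finset.range a).filter fun j => k ≤ w j).card

/-- Bruhat (dominance) order. -/
def Dom (v u : Equiv.Perm ℕ) : Prop := ∀ a k, rk v a k ≤ rk u a k

lemma Dom.refl (w : Equiv.Perm ℕ) : Dom w w := fun _ _ => le_refl _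

lemma Dom.trans {a b c : Equiv.Perm ℕ} (h1 : Dom a b) (h2 : Dom b c) : Dom a c :=
  fun x k => le_trans (h1 x k) (h2 x k)

lemma rk_succ (w : Equiv.Perm ℕ) (a k : ℕ) :
    rk w (a+1) k = rk w a k + if k ≤ w a then 1 else 0 := by
  unfold rk
  rw [Finset.range_add_one, Finset.filter_insert]
  split_ifs with h
  · rw [Finset.card_insert_of_notMem (by simp)]
  · simp

lemma rk_mul_swap_of_le {i a : ℕ} (h : a ≤ i) (w : Equiv.Perm ℕ) (k : ℕ) :
    rk (w * Equiv.swap i (i+1)) a k = rk w a k := by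
  unfold rk
  congr 1
  apply Finset.filter_congr
  intro j hj
  rw [Finset.mem_range] at hj
  rw [Equiv.Perm.mul_apply, Equiv.swap_apply_of_ne_of_ne (by omega) (by omega)]

lemma rk_mul_swap_of_ge {i a : ℕ} (h : i + 2 ≤ a) (w : Equiv.Perm ℕ) (k : ℕ) :
    rk (w * Equiv.swap i (i+1)) a k = rk w a k := by
  unfold rk
  have : (Finset.range a).filter (fun j => k ≤ (w * Equiv.swap i (i+1)) j)
      = ((Finset.range a).filter fun j => k ≤ w j).image (Equiv.swap i (i+1)) := by
    ext j
    simp only [Finset.mem_image, Finset.mem_filter, Finset.mem_range]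
    constructor
    · intro ⟨hj, hk⟩
      refine ⟨Equiv.swap i (i+1) j, ⟨(swap_lt_iff h).2 hj, ?_⟩, Equiv.swap_apply_self _ _ _⟩
      rwa [Equiv.Perm.mul_apply] at hk
    · rintro ⟨x, ⟨hx, hk⟩, rfl⟩
      refine ⟨(swap_lt_iff h).2 hx, ?_⟩
      rwa [Equiv.Perm.mul_apply, Equiv.swap_apply_self]
  rw [this, Finset.card_image_of_injective _ (Equiv.injective _)]

lemma mul_swap_apply_left (w : Equiv.Perm ℕ) (i : ℕ) :
    (w * Equiv.swap i (i+1)) i = w (i+1) := by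
  rw [Equiv.Perm.mul_apply, Equiv.swap_apply_left]

lemma mul_swap_apply_right (w : Equiv.Perm ℕ) (i : ℕ) :
    (w * Equiv.swap i (i+1)) (i+1) = w i := by
  rw [Equiv.Perm.mul_apply, Equiv.swap_apply_right]

lemma rk_mul_swap_succ {i : ℕ} (w : Equiv.Perm ℕ) (k : ℕ) :
    rk (w * Equiv.swap i (i+1)) (i+1) k = rk w i k + if k ≤ w (i+1) then 1 else 0 := by
  rw [rk_succ, rk_mul_swap_of_le (le_refl i), mul_swap_apply_left]

lemma dom_mul_swap_right {w : Equiv.Perm ℕ} {i : ℕ} (hasc : w i < w (i+1)) :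
    Dom w (w * Equiv.swap i (i+1)) := by
  intro a k
  rcases lt_trichotomy a (i+1) with h | h | h
  · rw [rk_mul_swap_of_le (by omega)]
  · subst h
    rw [rk_mul_swap_succ, rk_succ]
    have : (if k ≤ w i then 1 else 0) ≤ (if k ≤ w (i+1) then 1 else 0) := by
      split_ifs <;> omega
    omega
  · rw [rk_mul_swap_of_ge (by omega)]

lemma not_dom_mul_swap {w : Equiv.Perm ℕ} {i : ℕ} (hasc : w i < w (i+1)) :
    ¬ Dom (w * Equiv.swap i (i+1)) w := by
  intro h
  have h2 := h (i+1) (w (i+1))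
  rw [rk_mul_swap_succ, rk_succ] at h2
  rw [if_pos (le_refl _), if_neg (by omega)] at h2
  omega

lemma dom_mul_swap {w u : Equiv.Perm ℕ} {i : ℕ} (hwd : w (i+1) < w i) (hud : u (i+1) < u i)
    (h : Dom w u) : Dom (w * Equiv.swap i (i+1)) (u * Equiv.swap i (i+1)) := by
  intro a k
  rcases lt_trichotomy a (i+1) with ha | ha | ha
  · rw [rk_mul_swap_of_le (by omega), rk_mul_swap_of_le (by omega)]; exact h a k
  · subst ha
    rw [rk_mul_swap_succ, rk_mul_swap_succ]
    have hi := h i k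
    have hi2 := h (i+2) k
    rw [show i + 2 = (i+1)+1 from rfl, rk_succ, rk_succ, rk_succ, rk_succ] at hi2
    split_ifs at hi2 ⊢ <;> omega
  · rw [rk_mul_swap_of_ge (by omega), rk_mul_swap_of_ge (by omega)]; exact h a k





lemma longest_apply_lt {m i : ℕ} (h : i < m) : longest m i = m - 1 - i := by
  simp only [longest, Equiv.coe_fn_mk, if_pos h]

lemma longest_apply_ge {m i : ℕ} (h : m ≤ i) : longest m i = i := by
  simp only [longest, Equiv.coe_fn_mk, if_neg (by omega : ¬ i < m)]

lemma sum_perm {m : ℕ} {w : Equiv.Perm ℕ} (hw : InS m w) :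
    ∑ i ∈ Finset.range m, w i = ∑ i ∈ Finset.range m, i := by
  have hinj : ∀ x ∈ Finset.range m, ∀ y ∈ Finset.range m, w x = w y → x = y :=
    fun x _ y _ h => w.injective h
  have himg : (Finset.range m).image w = Finset.range m := by
    apply Finset.eq_of_subset_of_card_le
    · intro j hj
      rw [Finset.mem_image] at hj
      obtain ⟨x, hx, rfl⟩ := hj
      rw [Finset.mem_range] at hx ⊢
      exact hw.maps_lt hx
    · rw [Finset.card_image_of_injective _ w.injective]
  calc ∑ i ∈ Finset.range m, w i = ∑ j ∈ (Finset.range m).image w, j :=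
        (Finset.sum_image (f := fun j => j) hinj).symm
    _ = ∑ i ∈ Finset.range m, i := by rw [himg]

lemma eq_longest {m : ℕ} {w : Equiv.Perm ℕ} (hw : InS m w)
    (h : ∀ i, i < m → m - 1 - i ≤ w i) : w = longest m := by
  have hsum : ∑ i ∈ Finset.range m, (m - 1 - i) = ∑ i ∈ Finset.range m, i :=
    Finset.sum_range_reflect (fun i => i) m
  have heq : ∀ i, i < m → w i = m - 1 - i := by
    intro i hi
    by_contra hne
    have hlt : m - 1 - i < w i := lt_of_le_of_ne (h i hi) (Ne.symm hne)
    have : ∑ i ∈ Finset.range m, (m - 1 - i) < ∑ i ∈ Finset.range m, w i := by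
      apply Finset.sum_lt_sum
      · intro j hj; exact h j (Finset.mem_range.1 hj)
      · exact ⟨i, Finset.mem_range.2 hi, hlt⟩
    rw [sum_perm hw, hsum] at this
    omega
  apply Equiv.ext
  intro i
  rcases lt_or_ge i m with hi | hi
  · rw [heq i hi, longest_apply_lt hi]
  · rw [hw i hi, longest_apply_ge hi]

lemma exists_ascent {m : ℕ} {w : Equiv.Perm ℕ} (hw : InS m w) (hne : w ≠ longest m) :
    ∃ i, i + 1 < m ∧ w i < w (i+1) := by
  by_contra h
  push_neg at h
  have hdesc : ∀ i, i + 1 < m → w (i+1) < w i := by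
    intro i hi
    have h1 := h i hi
    have h2 : w i ≠ w (i+1) := fun he => by have := w.injective he; omega
    omega
  have haux : ∀ d i, i + d < m → w (i + d) + d ≤ w i := by
    intro d
    induction d with
    | zero => intro i _; simp
    | succ d ih =>
      intro i hi
      have h1 := ih (i+1) (by omega)
      have h2 := hdesc i (by omega)
      have : i + 1 + d = i + (d+1) := by omega
      rw [this] at h1
      omega
  apply hne
  apply eq_longest hw
  intro i hi
  have := haux (m - 1 - i) i (by omega)
  omega

lemma exists_factor {m : ℕ} {v : Equiv.Perm ℕ} (hv : InS m v) (hne : v ≠ longest m) :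
    ∃ i, i < m ∧ i + v i + 2 ≤ m := by
  by_contra h
  push_neg at h
  apply hne
  apply eq_longest hv
  intro i hi
  have := h i hi
  omega




/-- The inversion set of `w` within `S m`. -/
def invset (m : ℕ) (w : Equiv.Perm ℕ) : Finset (ℕ × ℕ) :=
  (Finset.range m ×ˢ Finset.range m).filter (fun p => p.1 < p.2 ∧ w p.2 < w p.1)

noncomputable def invc (m : ℕ) (w : Equiv.Perm ℕ) : ℕ := (invset m w).card

noncomputable def Nm (m : ℕ) : ℕ :=
  ((Finset.range m ×ˢ Finset.range m).filter (fun p : ℕ × ℕ => p.1 < p.2)).card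

lemma invc_le (m : ℕ) (w : Equiv.Perm ℕ) : invc m w ≤ Nm m := by
  apply Finset.card_le_card
  intro p hp
  rw [invset, Finset.mem_filter] at hp
  rw [Finset.mem_filter]
  exact ⟨hp.1, hp.2.1⟩

lemma mem_invset {m : ℕ} {w : Equiv.Perm ℕ} {p : ℕ × ℕ} :
    p ∈ invset m w ↔ p.1 < m ∧ p.2 < m ∧ p.1 < p.2 ∧ w p.2 < w p.1 := by
  simp only [invset, Finset.mem_filter, Finset.mem_product, Finset.mem_range]
  tauto

lemma swap_prod_injective (i : ℕ) :
    Function.Injective (fun p : ℕ × ℕ => (Equiv.swap i (i+1) p.1, Equiv.swap i (i+1) p.2)) := by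
  intro p q h
  simp only [Prod.mk.injEq] at h
  exact Prod.ext ((Equiv.injective _) h.1) ((Equiv.injective _) h.2)

lemma invset_swap {m i : ℕ} {w : Equiv.Perm ℕ} (him : i + 1 < m) (hasc : w i < w (i+1)) :
    invset m (w * Equiv.swap i (i+1)) =
      insert (i, i+1) ((invset m w).image
        (fun p => (Equiv.swap i (i+1) p.1, Equiv.swap i (i+1) p.2))) := by
  ext ⟨c, d⟩
  rw [Finset.mem_insert, mem_invset]
  constructor
  · rintro ⟨hc, hd, hcd, hinv⟩
    by_cases hpair : (c, d) = (i, i+1)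
    · left; exact hpair
    · right
      rw [Finset.mem_image]
      refine ⟨(Equiv.swap i (i+1) c, Equiv.swap i (i+1) d), ?_, ?_⟩
      · rw [mem_invset]
        have hne : ¬(c = i ∧ d = i + 1) := by
          intro ⟨h1, h2⟩; exact hpair (by rw [h1, h2])
        refine ⟨swap_lt_of_lt him hc, swap_lt_of_lt him hd, swap_lt_swap hcd hne, ?_⟩
        rw [Equiv.Perm.mul_apply, Equiv.Perm.mul_apply] at hinv
        exact hinv
      · simp [Equiv.swap_apply_self]
  · rintro (hp | hp)
    · rw [Prod.mk.injEq] at hp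
      obtain ⟨rfl, rfl⟩ := hp
      refine ⟨by omega, him, by omega, ?_⟩
      rw [Equiv.Perm.mul_apply, Equiv.Perm.mul_apply, Equiv.swap_apply_left,
        Equiv.swap_apply_right]
      exact hasc
    · rw [Finset.mem_image] at hp
      obtain ⟨⟨a, b⟩, hab, heq⟩ := hp
      rw [mem_invset] at hab
      dsimp only at hab
      obtain ⟨ha, hb, hlt, hinv⟩ := hab
      simp only [Prod.mk.injEq] at heq
      obtain ⟨rfl, rfl⟩ := heq
      have hne : ¬(a = i ∧ b = i + 1) := by
        intro ⟨h1, h2⟩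
        rw [h1, h2] at hinv
        omega
      refine ⟨swap_lt_of_lt him ha, swap_lt_of_lt him hb, swap_lt_swap hlt hne, ?_⟩
      rw [Equiv.Perm.mul_apply, Equiv.Perm.mul_apply, Equiv.swap_apply_self,
        Equiv.swap_apply_self]
      exact hinv

lemma pair_not_mem_image {m i : ℕ} {w : Equiv.Perm ℕ} :
    (i, i+1) ∉ (invset m w).image
      (fun p => (Equiv.swap i (i+1) p.1, Equiv.swap i (i+1) p.2)) := by
  rw [Finset.mem_image]
  rintro ⟨⟨a, b⟩, hab, heq⟩
  simp only [Prod.mk.injEq] at heq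
  have ha : a = i + 1 := by
    have := heq.1
    have h2 : Equiv.swap i (i+1) (i+1) = i := Equiv.swap_apply_right i (i+1)
    exact (Equiv.injective _) (by rw [this, h2])
  have hb : b = i := by
    have := heq.2
    have h2 : Equiv.swap i (i+1) i = i + 1 := Equiv.swap_apply_left i (i+1)
    exact (Equiv.injective _) (by rw [this, h2])
  rw [mem_invset] at hab
  dsimp only at hab
  omega

lemma invc_swap {m i : ℕ} {w : Equiv.Perm ℕ} (him : i + 1 < m) (hasc : w i < w (i+1)) :
    invc m (w * Equiv.swap i (i+1)) = invc m w + 1 := by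
  unfold invc
  rw [invset_swap him hasc, Finset.card_insert_of_notMem pair_not_mem_image,
    Finset.card_image_of_injective _ (swap_prod_injective i)]

/-- The inversion product. -/
noncomputable def Pprod (m : ℕ) (w : Equiv.Perm ℕ) : MvPolynomial ℕ ℤ :=
  ∏ p ∈ (Finset.range m ×ˢ Finset.range m).filter
      (fun p => p.1 < p.2 ∧ w p.2 < w p.1),
    (X (w p.1) - X (w p.2) : MvPolynomial ℕ ℤ)

lemma Pprod_eq (m : ℕ) (w : Equiv.Perm ℕ) :
    Pprod m w = ∏ p ∈ invset m w, (X (w p.1) - X (w p.2) : MvPolynomial ℕ ℤ) := rfl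

lemma Pprod_swap {m i : ℕ} {w : Equiv.Perm ℕ} (him : i + 1 < m) (hasc : w i < w (i+1)) :
    Pprod m (w * Equiv.swap i (i+1)) = (X (w (i+1)) - X (w i)) * Pprod m w := by
  rw [Pprod_eq, Pprod_eq, invset_swap him hasc,
    Finset.prod_insert pair_not_mem_image,
    Finset.prod_image (fun x _ y _ h => swap_prod_injective i h)]
  congr 1
  · rw [Equiv.Perm.mul_apply, Equiv.Perm.mul_apply, Equiv.swap_apply_left,
      Equiv.swap_apply_right]
  · apply Finset.prod_congr rfl
    intro p _
    rw [Equiv.Perm.mul_apply, Equiv.Perm.mul_apply, Equiv.swap_apply_self,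
      Equiv.swap_apply_self]


/-! ### the specialization homomorphism and the divided-difference identity -/

noncomputable def psi (v : Equiv.Perm ℕ) : MvPolynomial (ℕ ⊕ ℕ) ℤ →ₐ[ℤ] MvPolynomial ℕ ℤ :=
  aeval (Sum.elim (fun a => (X (v a) : MvPolynomial ℕ ℤ)) (fun b => X b))

lemma psi_X_inl (v : Equiv.Perm ℕ) (a : ℕ) : psi v (X (Sum.inl a)) = X (v a) := by
  simp [psi]

lemma psi_sX (v : Equiv.Perm ℕ) (i : ℕ) (f : MvPolynomial (ℕ ⊕ ℕ) ℤ) :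
    psi v (sX i f) = psi (v * Equiv.swap i (i+1)) f := by
  unfold psi sX
  rw [aeval_rename]
  have hfun : ((Sum.elim (fun a => (X (v a) : MvPolynomial ℕ ℤ)) fun b => X b) ∘
      Sum.map (⇑(Equiv.swap i (i+1))) id) =
      (Sum.elim (fun a => (X ((v * Equiv.swap i (i+1)) a) : MvPolynomial ℕ ℤ)) fun b => X b) := by
    funext x
    cases x with
    | inl a => simp [Equiv.Perm.mul_apply]
    | inr b => simp
  rw [hfun]

lemma star {S : Equiv.Perm ℕ → MvPolynomial (ℕ ⊕ ℕ) ℤ} (hS : IsSchubertFamily S)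
    {m i : ℕ} {w : Equiv.Perm ℕ} (hw : InS m w) (him : i + 1 < m)
    (hasc : w i < w (i+1)) (v : Equiv.Perm ℕ) :
    (X (v i) - X (v (i+1))) * psi v (S w) =
      psi v (S (w * Equiv.swap i (i+1))) -
        psi (v * Equiv.swap i (i+1)) (S (w * Equiv.swap i (i+1))) := by
  set w' := w * Equiv.swap i (i+1) with hw'def
  have hfs : FinSupp w' := (hw.mul_swap him).finSupp
  have hdesc : w' (i+1) < w' i := by
    rw [hw'def, mul_swap_apply_left, mul_swap_apply_right]
    exact hasc
  have h := (hS.2.1 w' hfs i).1 hdesc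
  have hww : w' * Equiv.swap i (i+1) = w := by
    rw [hw'def, mul_assoc, Equiv.swap_mul_self, mul_one]
  rw [hww] at h
  have h2 := congrArg (psi v) h
  rw [map_mul, map_sub, map_sub, psi_X_inl, psi_X_inl, psi_sX] at h2
  exact h2

/-! ### base case -/

lemma psi_longest {S : Equiv.Perm ℕ → MvPolynomial (ℕ ⊕ ℕ) ℤ} (hS : IsSchubertFamily S)
    (m : ℕ) (v : Equiv.Perm ℕ) :
    psi v (S (longest m)) = ∏ i ∈ Finset.range m, ∏ j ∈ Finset.range m,
      if i + j + 2 ≤ m then (X (v i) - X j : MvPolynomial ℕ ℤ) else 1 := by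
  rw [hS.1 m, map_prod]
  apply Finset.prod_congr rfl
  intro i _
  rw [map_prod]
  apply Finset.prod_congr rfl
  intro j _
  rw [apply_ite (psi v), map_sub, map_one]
  simp [psi]

lemma base_vanish {S : Equiv.Perm ℕ → MvPolynomial (ℕ ⊕ ℕ) ℤ} (hS : IsSchubertFamily S)
    (m : ℕ) (v : Equiv.Perm ℕ) (hv : InS m v) (hnd : ¬ Dom (longest m) v) :
    psi v (S (longest m)) = 0 := by
  have hne : v ≠ longest m := by
    intro h; exact hnd (h ▸ Dom.refl v)
  obtain ⟨i, him, hfac⟩ := exists_factor hv hne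
  rw [psi_longest hS]
  apply Finset.prod_eq_zero (Finset.mem_range.2 him)
  apply Finset.prod_eq_zero (Finset.mem_range.2 (show v i < m by omega))
  rw [if_pos (by omega), sub_self]

lemma base_diag {S : Equiv.Perm ℕ → MvPolynomial (ℕ ⊕ ℕ) ℤ} (hS : IsSchubertFamily S)
    (m : ℕ) : psi (longest m) (S (longest m)) = Pprod m (longest m) := by
  rw [psi_longest hS, ← Finset.prod_product', ← Finset.prod_filter, Pprod]
  apply Finset.prod_nbij' (fun p : ℕ × ℕ => (p.1, m - 1 - p.2))
    (fun q : ℕ × ℕ => (q.1, m - 1 - q.2))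
  · intro p hp
    simp only [Finset.mem_filter, Finset.mem_product, Finset.mem_range] at hp ⊢
    obtain ⟨⟨h1, h2⟩, h3⟩ := hp
    refine ⟨⟨h1, by omega⟩, by omega, ?_⟩
    rw [longest_apply_lt (by omega : m - 1 - p.2 < m), longest_apply_lt h1]
    omega
  · intro q hq
    simp only [Finset.mem_filter, Finset.mem_product, Finset.mem_range] at hq ⊢
    obtain ⟨⟨h1, h2⟩, h3, h4⟩ := hq
    refine ⟨⟨h1, by omega⟩, by omega⟩
  · intro p hp
    simp only [Finset.mem_filter, Finset.mem_product, Finset.mem_range] at hp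
    have : p.2 ≤ m - 1 := by omega
    ext <;> simp <;> omega
  · intro q hq
    simp only [Finset.mem_filter, Finset.mem_product, Finset.mem_range] at hq
    ext <;> simp <;> omega
  · intro p hp
    simp only [Finset.mem_filter, Finset.mem_product, Finset.mem_range] at hp
    obtain ⟨⟨h1, h2⟩, h3⟩ := hp
    have hval : longest m (m - 1 - p.2) = p.2 := by
      rw [longest_apply_lt (by omega)]; omega
    rw [hval]

lemma base {S : Equiv.Perm ℕ → MvPolynomial (ℕ ⊕ ℕ) ℤ} (hS : IsSchubertFamily S) (m : ℕ) :
    (∀ v, InS m v → ¬ Dom (longest m) v → psi v (S (longest m)) = 0) ∧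
      psi (longest m) (S (longest m)) = Pprod m (longest m) :=
  ⟨fun v hv hnd => base_vanish hS m v hv hnd, base_diag hS m⟩

/-! ### inductive step -/

lemma X_sub_ne {a b : ℕ} (h : a ≠ b) : (X a - X b : MvPolynomial ℕ ℤ) ≠ 0 :=
  sub_ne_zero.2 (fun he => h (MvPolynomial.X_injective he))

lemma step {S : Equiv.Perm ℕ → MvPolynomial (ℕ ⊕ ℕ) ℤ} (hS : IsSchubertFamily S)
    {m i : ℕ} {w : Equiv.Perm ℕ} (hw : InS m w) (him : i + 1 < m) (hasc : w i < w (i+1))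
    (IH : (∀ v, InS m v → ¬ Dom (w * Equiv.swap i (i+1)) v →
            psi v (S (w * Equiv.swap i (i+1))) = 0) ∧
          psi (w * Equiv.swap i (i+1)) (S (w * Equiv.swap i (i+1)))
            = Pprod m (w * Equiv.swap i (i+1))) :
    (∀ v, InS m v → ¬ Dom w v → psi v (S w) = 0) ∧ psi w (S w) = Pprod m w := by
  have hDom : Dom w (w * Equiv.swap i (i+1)) := dom_mul_swap_right hasc
  constructor
  · intro v hv hnd
    have hvne : v i ≠ v (i+1) := fun h => by have := v.injective h; omega
    have h1 : psi v (S (w * Equiv.swap i (i+1))) = 0 :=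
      IH.1 v hv (fun hd => hnd (hDom.trans hd))
    have h2 : psi (v * Equiv.swap i (i+1)) (S (w * Equiv.swap i (i+1))) = 0 := by
      apply IH.1 (v * Equiv.swap i (i+1)) (hv.mul_swap him)
      intro hd
      rcases lt_or_gt_of_ne hvne with hvi | hvi
      · -- v ascent at i
        have hd1 : (w * Equiv.swap i (i+1)) (i+1) < (w * Equiv.swap i (i+1)) i := by
          rw [mul_swap_apply_left, mul_swap_apply_right]; exact hasc
        have hd2 : (v * Equiv.swap i (i+1)) (i+1) < (v * Equiv.swap i (i+1)) i := by
          rw [mul_swap_apply_left, mul_swap_apply_right]; exact hvi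
        have h3 := dom_mul_swap hd1 hd2 hd
        rw [mul_assoc, mul_assoc, Equiv.swap_mul_self, mul_one, mul_one] at h3
        exact hnd h3
      · -- v descent at i
        have hd2 : (v * Equiv.swap i (i+1)) i < (v * Equiv.swap i (i+1)) (i+1) := by
          rw [mul_swap_apply_left, mul_swap_apply_right]; exact hvi
        have h3 := dom_mul_swap_right hd2
        rw [mul_assoc, Equiv.swap_mul_self, mul_one] at h3
        exact hnd (hDom.trans (hd.trans h3))
    have hstar := star hS hw him hasc v
    rw [h1, h2, sub_zero] at hstar
    rcases mul_eq_zero.1 hstar with h | h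
    · exact absurd h (X_sub_ne hvne)
    · exact h
  · have hwne : w i ≠ w (i+1) := by omega
    have hstar := star hS hw him hasc w
    have h1 : psi w (S (w * Equiv.swap i (i+1))) = 0 :=
      IH.1 w hw (not_dom_mul_swap hasc)
    rw [h1, IH.2, Pprod_swap him hasc, zero_sub] at hstar
    apply mul_left_cancel₀ (X_sub_ne hwne)
    rw [hstar]
    ring

/-! ### the main induction -/

lemma main (S : Equiv.Perm ℕ → MvPolynomial (ℕ ⊕ ℕ) ℤ) (hS : IsSchubertFamily S) (m : ℕ) :
    ∀ (n : ℕ) (w : Equiv.Perm ℕ), InS m w → Nm m ≤ invc m w + n →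
      (∀ v, InS m v → ¬ Dom w v → psi v (S w) = 0) ∧ psi w (S w) = Pprod m w := by
  intro n
  induction n with
  | zero =>
    intro w hw hN
    by_cases hL : w = longest m
    · subst hL; exact base hS m
    · exfalso
      obtain ⟨i, him, hasc⟩ := exists_ascent hw hL
      have h1 := invc_swap him hasc (w := w)
      have h2 := invc_le m (w * Equiv.swap i (i+1))
      omega
  | succ n ih =>
    intro w hw hN
    by_cases hL : w = longest m
    · subst hL; exact base hS m
    · obtain ⟨i, him, hasc⟩ := exists_ascent hw hL
      have h1 := invc_swap him hasc (w := w)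
      have h2 := invc_le m (w * Equiv.swap i (i+1))
      exact step hS hw him hasc (ih (w * Equiv.swap i (i+1)) (hw.mul_swap him) (by omega))

end SchubAux

/-- `𝔖_u(b_{u 1}, …, b_{u m}; b_1, …, b_m)` equals the product of
`(b_{u i} - b_{u j})` over all pairs `i < j` (in `{1, …, m}`, 0-indexed below)
with `u i > u j`. -/
theorem schubert_specialization_diagonal
    (S : Equiv.Perm ℕ → MvPolynomial (ℕ ⊕ ℕ) ℤ) (hS : IsSchubertFamily S)
    (m : ℕ) (u : Equiv.Perm ℕ) (hu : ∀ t, m ≤ t → u t = t) :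
    aeval (Sum.elim (fun a => (X (u a) : MvPolynomial ℕ ℤ)) (fun b => X b)) (S u) =
      ∏ p ∈ (Finset.range m ×ˢ Finset.range m).filter
          (fun p => p.1 < p.2 ∧ u p.2 < u p.1),
        (X (u p.1) - X (u p.2) : MvPolynomial ℕ ℤ) := by
  have h := (SchubAux.main S hS m (SchubAux.Nm m) u hu (Nat.le_add_left _ _)).2
  exact h
end
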